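/- arXiv:2205.14114 — 6 statements merged into one kernel-verified Lean document; each statement's English description precedes it below -/
import Mathlib

section
/- For every t > 0 and every integrable u : (0,t) → ℝ with u₁(t) = 0, one has ∫₀ᵗ |u₁|⁵ ≤ 3 ‖u‖_{L^∞} (∫₀ᵗ u₁²)², where u₁(s) = ∫₀ˢ u. -/
open MeasureTheory

lemma key_aux (M c d : ℝ) (hM : 0 < M) (G : ℝ → ℝ) (hcd : c ≤ d)
    (hGcont : ContinuousOn G (Set.Icc c d)) (hGc : G c = 0)
    (hLip : ∀ x y, c ≤ x → x ≤ y → y ≤ d → |G y - G x| ≤ M * (y - x))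
    (s : ℝ) (hs : s ∈ Set.Icc c d) :
    |G s| ^ 3 ≤ 3 * M * ∫ x in c..s, (G x) ^ 2 := by
  set a := |G s| with ha_def
  have ha0 : 0 ≤ a := abs_nonneg _
  have haM : a ≤ M * (s - c) := by
    have := hLip c s le_rfl hs.1 hs.2
    simpa [hGc] using this
  set e := s - a / M with he_def
  have hce : c ≤ e := by
    have : a / M ≤ s - c := (div_le_iff₀ hM).mpr (by linarith [haM])
    simp only [he_def]; linarith
  have hes : e ≤ s := by
    have : 0 ≤ a / M := div_nonneg ha0 hM.le
    simp only [he_def]; linarith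
  -- integrability of G^2 on subintervals
  have hG2cont : ContinuousOn (fun x => (G x) ^ 2) (Set.Icc c d) := hGcont.pow 2
  have hInt : ∀ p q : ℝ, c ≤ p → p ≤ q → q ≤ d →
      IntervalIntegrable (fun x => (G x) ^ 2) volume p q := by
    intro p q hp hpq hq
    apply (hG2cont.mono ?_).intervalIntegrable
    rw [Set.uIcc_of_le hpq]
    exact Set.Icc_subset_Icc hp hq
  -- pointwise lower bound on [e,s]
  have hpt : ∀ x ∈ Set.Icc e s, (a - M * (s - x)) ^ 2 ≤ (G x) ^ 2 := by
    intro x hx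
    have hcx : c ≤ x := le_trans hce hx.1
    have hxs : x ≤ s := hx.2
    have h1 : |G s - G x| ≤ M * (s - x) := hLip x s hcx hxs hs.2
    have h2 : a - |G x| ≤ |G s - G x| := by
      have := abs_sub_abs_le_abs_sub (G s) (G x)
      linarith [this]
    have h3 : a - M * (s - x) ≤ |G x| := by linarith
    have h4 : 0 ≤ a - M * (s - x) := by
      have hMe : M * (s - x) ≤ M * (s - e) := by
        apply mul_le_mul_of_nonneg_left _ hM.le
        linarith [hx.1]
      have : M * (s - e) = a := by
        simp only [he_def]
        field_simp
        ring
      linarith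
    calc (a - M * (s - x)) ^ 2 ≤ |G x| ^ 2 :=
          pow_le_pow_left₀ h4 h3 2
      _ = (G x) ^ 2 := by rw [sq_abs]
  -- compute the explicit integral
  have hcomp : (∫ x in e..s, (a - M * (s - x)) ^ 2) = a ^ 3 / (3 * M) := by
    have hderiv : ∀ x ∈ Set.uIcc e s,
        HasDerivAt (fun x => (a - M * s + M * x) ^ 3 / (3 * M))
          ((a - M * (s - x)) ^ 2) x := by
      intro x _
      have h1 : HasDerivAt (fun x : ℝ => a - M * s + M * x) M x := by
        simpa using ((hasDerivAt_id x).const_mul M).const_add (a - M * s)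
      have h2 := (h1.pow 3).div_const (3 * M)
      refine h2.congr_deriv ?_
      field_simp
      ring
    have hint : IntervalIntegrable (fun x => (a - M * (s - x)) ^ 2) volume e s := by
      apply Continuous.intervalIntegrable
      continuity
    rw [intervalIntegral.integral_eq_sub_of_hasDerivAt hderiv hint]
    have hMe : M * (a / M) = a := by field_simp
    simp only [he_def]
    rw [show a - M * s + M * (s - a / M) = a - M * (a/M) by ring, hMe]
    ring_nf
  -- chain of inequalities
  have hstep1 : a ^ 3 / (3 * M) ≤ ∫ x in e..s, (G x) ^ 2 := by
    rw [← hcomp]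
    apply intervalIntegral.integral_mono_on hes _ (hInt e s hce hes hs.2) hpt
    apply Continuous.intervalIntegrable
    continuity
  have hstep2 : (∫ x in e..s, (G x) ^ 2) ≤ ∫ x in c..s, (G x) ^ 2 := by
    have hsplit := intervalIntegral.integral_add_adjacent_intervals
      (hInt c e le_rfl hce (hes.trans hs.2)) (hInt e s hce hes hs.2)
    have hnn : 0 ≤ ∫ x in c..e, (G x) ^ 2 :=
      intervalIntegral.integral_nonneg hce (fun x _ => sq_nonneg _)
    linarith [hsplit]
  have h3M : 0 < 3 * M := by linarith
  rw [div_le_iff₀ h3M] at hstep1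
  nlinarith [hstep1, hstep2]

theorem stmt2 (t : ℝ) (ht : 0 < t) (u : ℝ → ℝ) (M : ℝ)
    (hu : IntegrableOn u (Set.Ioc 0 t))
    (hbound : ∀ᵐ s ∂(volume.restrict (Set.Ioc 0 t)), |u s| ≤ M)
    (hzero : (∫ x in (0:ℝ)..t, u x) = 0) :
    (∫ s in (0:ℝ)..t, |∫ x in (0:ℝ)..s, u x| ^ 5) ≤
      3 * M * (∫ s in (0:ℝ)..t, (∫ x in (0:ℝ)..s, u x) ^ 2) ^ 2 := by
  set F : ℝ → ℝ := fun s => ∫ x in (0:ℝ)..s, u x with hF_def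
  -- M is nonnegative
  have hMnn : 0 ≤ M := by
    haveI : Filter.NeBot (ae (volume.restrict (Set.Ioc 0 t))) := by
      rw [ae_neBot, Ne, Measure.restrict_eq_zero, Real.volume_Ioc]
      simp only [sub_zero, ENNReal.ofReal_eq_zero, not_le]
      exact ht
    obtain ⟨s, hs⟩ := hbound.exists
    exact le_trans (abs_nonneg _) hs
  -- interval integrability of u on subintervals
  have huInt : ∀ x s : ℝ, 0 ≤ x → x ≤ s → s ≤ t → IntervalIntegrable u volume x s := by
    intro x s hx hxs hst
    rw [intervalIntegrable_iff_integrableOn_Ioc_of_le hxs]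
    exact hu.mono_set (Set.Ioc_subset_Ioc (by linarith) hst)
  -- Lipschitz bound
  have hLip : ∀ x s : ℝ, 0 ≤ x → x ≤ s → s ≤ t → |F s - F x| ≤ M * (s - x) := by
    intro x s hx hxs hst
    have h1 : F s - F x = ∫ y in x..s, u y :=
      intervalIntegral.integral_interval_sub_left
        (huInt 0 s le_rfl (by linarith) hst) (huInt 0 x le_rfl hx (by linarith))
    rw [h1]
    have hae : ∀ᵐ y ∂(volume.restrict (Set.uIoc x s)), ‖u y‖ ≤ M := by
      apply ae_restrict_of_ae_restrict_of_subset _ hbound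
      rw [Set.uIoc_of_le hxs]
      exact Set.Ioc_subset_Ioc (by linarith) hst
    have := intervalIntegral.norm_integral_le_abs_of_norm_le hae
      (intervalIntegrable_const : IntervalIntegrable (fun _ => M) volume x s)
    simp only [intervalIntegral.integral_const, smul_eq_mul] at this
    calc |∫ y in x..s, u y| ≤ |(s - x) * M| := this
      _ = M * (s - x) := by
          rw [abs_of_nonneg (by nlinarith)]; ring
  -- continuity of F on [0,t]
  have hFcont : ContinuousOn F (Set.Icc 0 t) := by
    have hIcc : IntegrableOn u (Set.Icc 0 t) :=
      (integrableOn_Icc_iff_integrableOn_Ioc).mpr hu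
    apply (intervalIntegral.continuousOn_primitive hIcc).congr
    intro s hs
    simp only [hF_def]
    rw [intervalIntegral.integral_of_le hs.1]
  have hFt : F t = 0 := hzero
  have hF0 : F 0 = 0 := by simp [hF_def]
  -- integrability of powers of F
  have hIntPow : ∀ n : ℕ, IntervalIntegrable (fun x => |F x| ^ n) volume 0 t := by
    intro n
    apply ((hFcont.abs.pow n).mono _).intervalIntegrable
    rw [Set.uIcc_of_le ht.le]
  have hIntSq : IntervalIntegrable (fun x => (F x) ^ 2) volume 0 t := by
    apply ((hFcont.pow 2).mono _).intervalIntegrable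
    rw [Set.uIcc_of_le ht.le]
  set I : ℝ := ∫ x in (0:ℝ)..t, (F x) ^ 2 with hI_def
  have hInn : 0 ≤ I :=
    intervalIntegral.integral_nonneg ht.le (fun x _ => sq_nonneg _)
  rcases eq_or_lt_of_le hMnn with hM0 | hMpos
  · -- M = 0 : F ≡ 0 on [0,t]
    have hzeroF : ∀ s ∈ Set.Icc (0:ℝ) t, F s = 0 := by
      intro s hs
      have hu0 : ∀ᵐ y ∂(volume.restrict (Set.Ioc 0 s)), u y = 0 := by
        have : ∀ᵐ y ∂(volume.restrict (Set.Ioc 0 s)), |u y| ≤ M :=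
          ae_restrict_of_ae_restrict_of_subset (Set.Ioc_subset_Ioc le_rfl hs.2) hbound
        filter_upwards [this] with y hy
        have : |u y| ≤ 0 := by rw [hM0]; exact hy
        simpa [abs_nonpos_iff] using this
      simp only [hF_def]
      rw [intervalIntegral.integral_of_le hs.1]
      exact integral_eq_zero_of_ae hu0
    have hL : (∫ s in (0:ℝ)..t, |F s| ^ 5) = 0 := by
      rw [intervalIntegral.integral_congr (g := fun _ => 0)]
      · simp
      · intro s hs
        rw [Set.uIcc_of_le ht.le] at hs
        simp [hzeroF s hs]
    rw [hL, ← hM0]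
    positivity
  · -- M > 0 : key pointwise bound
    have hkey : ∀ s ∈ Set.Icc (0:ℝ) t, |F s| ^ 3 ≤ 3 * M / 2 * I := by
      intro s hs
      have hA : |F s| ^ 3 ≤ 3 * M * ∫ x in (0:ℝ)..s, (F x) ^ 2 :=
        key_aux M 0 t hMpos F ht.le hFcont hF0
          (fun x y hx hxy hy => hLip x y hx hxy hy) s hs
      -- mirrored bound
      set G : ℝ → ℝ := fun x => F (t - x) with hG_def
      have hGcont : ContinuousOn G (Set.Icc 0 t) := by
        apply hFcont.comp (continuous_const.sub continuous_id).continuousOn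
        intro x hx
        simp only [Set.mem_Icc] at hx ⊢
        simp only [Pi.sub_apply, id_eq]
        constructor
        · linarith [hx.2]
        · linarith [hx.1]
      have hGLip : ∀ x y, 0 ≤ x → x ≤ y → y ≤ t → |G y - G x| ≤ M * (y - x) := by
        intro x y hx hxy hy
        have := hLip (t - y) (t - x) (by linarith) (by linarith) (by linarith)
        calc |G y - G x| = |F (t - x) - F (t - y)| := by
              rw [abs_sub_comm]
          _ ≤ M * ((t - x) - (t - y)) := this
          _ = M * (y - x) := by ring_nf
      have hG0 : G 0 = 0 := by simp [hG_def, hFt]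
      have hB' := key_aux M 0 t hMpos G ht.le hGcont hG0 hGLip (t - s)
        ⟨by linarith [hs.2], by linarith [hs.1]⟩
      have hGs : G (t - s) = F s := by simp [hG_def]
      have hchg : (∫ x in (0:ℝ)..(t - s), (G x) ^ 2) = ∫ x in s..t, (F x) ^ 2 := by
        simp only [hG_def]
        rw [intervalIntegral.integral_comp_sub_left (fun x => (F x) ^ 2) t]
        norm_num
      rw [hGs, hchg] at hB'
      have hsplit : (∫ x in (0:ℝ)..s, (F x) ^ 2) + (∫ x in s..t, (F x) ^ 2) = I := by
        apply intervalIntegral.integral_add_adjacent_intervals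
        · apply ((hFcont.pow 2).mono _).intervalIntegrable
          rw [Set.uIcc_of_le hs.1]
          exact Set.Icc_subset_Icc le_rfl hs.2
        · apply ((hFcont.pow 2).mono _).intervalIntegrable
          rw [Set.uIcc_of_le hs.2]
          exact Set.Icc_subset_Icc hs.1 le_rfl
      have hsum : 3 * M * ((∫ x in (0:ℝ)..s, (F x) ^ 2) + ∫ x in s..t, (F x) ^ 2)
          = 3 * M * I := by rw [hsplit]
      rw [mul_add] at hsum
      linarith
    -- integrate the pointwise bound
    have hmain : (∫ s in (0:ℝ)..t, |F s| ^ 5) ≤ ∫ s in (0:ℝ)..t, (3 * M / 2 * I) * (F s) ^ 2 := by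
      apply intervalIntegral.integral_mono_on ht.le (hIntPow 5) (hIntSq.const_mul _)
      intro s hs
      have h5 : |F s| ^ 5 = |F s| ^ 3 * (F s) ^ 2 := by
        rw [← sq_abs (F s)]; ring
      rw [h5]
      apply mul_le_mul_of_nonneg_right (hkey s hs) (sq_nonneg _)
    have heq : (∫ s in (0:ℝ)..t, (3 * M / 2 * I) * (F s) ^ 2) = 3 * M / 2 * I * I := by
      rw [intervalIntegral.integral_const_mul]
    calc (∫ s in (0:ℝ)..t, |F s| ^ 5) ≤ 3 * M / 2 * I * I := by rw [← heq]; exact hmain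
      _ ≤ 3 * M * I ^ 2 := by nlinarith
end

section
/- There exists C > 0 such that for every t > 0 and every bounded measurable u : (0,t) → ℝ, ‖u₁‖_{L⁸}⁸ ≤ C t |u₁(t)|⁸ + C ‖u‖_{L^∞}² ξ_D(t,u), where ξ_D(t,u) = (1/72) ∫₀ᵗ (∫₀ˢ u₁³)² ds and u₁ is the primitive of u vanishing at 0. -/
open MeasureTheory Set

lemma my_ibp {t : ℝ} (ht : 0 ≤ t) {f g : ℝ → ℝ}
    (hf : IntegrableOn f (Ioc 0 t)) (hg : IntegrableOn g (Ioc 0 t))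
    (hgF : IntegrableOn (fun x => g x * ∫ y in Ioc 0 x, f y) (Ioc 0 t)) :
    (∫ s in Ioc 0 t, f s * ∫ x in Ioc 0 s, g x)
      + (∫ s in Ioc 0 t, g s * ∫ x in Ioc 0 s, f x)
    = (∫ x in Ioc 0 t, f x) * (∫ x in Ioc 0 t, g x) := by
  set μ := volume.restrict (Ioc (0:ℝ) t) with hμ
  have hmeas : MeasurableSet {p : ℝ × ℝ | p.2 ≤ p.1} :=
    measurableSet_le measurable_snd measurable_fst
  have hHeq : (fun p : ℝ × ℝ => f p.1 * (Iic p.1).indicator g p.2)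
      = {p : ℝ × ℝ | p.2 ≤ p.1}.indicator (fun p => f p.1 * g p.2) := by
    ext p
    by_cases h : p.2 ≤ p.1 <;> simp [Set.indicator_apply, h]
  have hH : Integrable (fun p : ℝ × ℝ => f p.1 * (Iic p.1).indicator g p.2) (μ.prod μ) := by
    rw [hHeq]
    exact (hf.mul_prod hg).indicator hmeas
  have swap := integral_integral_swap (f := fun s x => f s * (Iic s).indicator g x) hH
  have lhs_eq : (∫ s, (∫ x, f s * (Iic s).indicator g x ∂μ) ∂μ)
      = ∫ s in Ioc 0 t, f s * ∫ x in Ioc 0 s, g x := by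
    apply setIntegral_congr_fun measurableSet_Ioc
    intro s hs
    show (∫ x, f s * (Iic s).indicator g x ∂μ) = f s * ∫ x in Ioc 0 s, g x
    have hset : Iic s ∩ Ioc 0 t = Ioc 0 s := by
      ext x; simp only [mem_inter_iff, mem_Iic, mem_Ioc]
      exact ⟨fun h => ⟨h.2.1, h.1⟩, fun h => ⟨h.2, h.1, h.2.trans hs.2⟩⟩
    calc ∫ x, f s * (Iic s).indicator g x ∂μ
        = f s * ∫ x, (Iic s).indicator g x ∂μ := integral_const_mul _ _
      _ = f s * ∫ x in Iic s, g x ∂μ := by rw [integral_indicator measurableSet_Iic]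
      _ = f s * ∫ x in Iic s ∩ Ioc 0 t, g x := by
            rw [hμ, Measure.restrict_restrict measurableSet_Iic]
      _ = f s * ∫ x in Ioc 0 s, g x := by rw [hset]
  have rhs_eq : (∫ x, (∫ s, f s * (Iic s).indicator g x ∂μ) ∂μ)
      = ∫ x in Ioc 0 t, g x * ((∫ y in Ioc 0 t, f y) - ∫ y in Ioc 0 x, f y) := by
    apply setIntegral_congr_fun measurableSet_Ioc
    intro x hx
    show (∫ s, f s * (Iic s).indicator g x ∂μ)
        = g x * ((∫ y in Ioc 0 t, f y) - ∫ y in Ioc 0 x, f y)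
    have hfun : (fun s => f s * (Iic s).indicator g x)
        = (Ici x).indicator (fun s => f s * g x) := by
      ext s
      by_cases h : x ≤ s <;> simp [Set.indicator_apply, h]
    have hset : Ici x ∩ Ioc 0 t = Ioc x t ∪ {x} := by
      ext y; simp only [mem_inter_iff, mem_Ici, mem_Ioc, mem_union, mem_singleton_iff]
      constructor
      · rintro ⟨h1, h2, h3⟩
        rcases eq_or_lt_of_le h1 with h | h
        · right; exact h.symm
        · left; exact ⟨h, h3⟩
      · rintro (⟨h1, h2⟩ | rfl)
        · exact ⟨h1.le, hx.1.trans h1, h2⟩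
        · exact ⟨le_rfl, hx.1, hx.2⟩
    have hIcc : Ici x ∩ Ioc 0 t = Icc x t := by
      ext y; simp only [mem_inter_iff, mem_Ici, mem_Ioc, mem_Icc]
      exact ⟨fun h => ⟨h.1, h.2.2⟩, fun h => ⟨h.1, hx.1.trans_le h.1, h.2⟩⟩
    have hsplit : (∫ y in Ioc 0 x, f y) + ∫ y in Ioc x t, f y = ∫ y in Ioc 0 t, f y := by
      rw [← setIntegral_union (Ioc_disjoint_Ioc_of_le le_rfl) measurableSet_Ioc
        (hf.mono_set (Ioc_subset_Ioc_right hx.2)) (hf.mono_set (Ioc_subset_Ioc_left hx.1.le)),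
        Ioc_union_Ioc_eq_Ioc hx.1.le hx.2]
    calc ∫ s, f s * (Iic s).indicator g x ∂μ
        = ∫ s, (Ici x).indicator (fun s => f s * g x) s ∂μ := by rw [hfun]
      _ = ∫ s in Ici x, f s * g x ∂μ := integral_indicator measurableSet_Ici
      _ = ∫ s in Ici x ∩ Ioc 0 t, f s * g x := by
            rw [hμ, Measure.restrict_restrict measurableSet_Ici]
      _ = ∫ s in Icc x t, f s * g x := by rw [hIcc]
      _ = ∫ s in Ioc x t, f s * g x := integral_Icc_eq_integral_Ioc
      _ = (∫ s in Ioc x t, f s) * g x := integral_mul_const _ _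
      _ = g x * ((∫ y in Ioc 0 t, f y) - ∫ y in Ioc 0 x, f y) := by rw [← hsplit]; ring
  rw [lhs_eq, rhs_eq] at swap
  have hsub : ∫ x in Ioc 0 t, g x * ((∫ y in Ioc 0 t, f y) - ∫ y in Ioc 0 x, f y)
      = (∫ y in Ioc 0 t, f y) * (∫ x in Ioc 0 t, g x)
        - ∫ x in Ioc 0 t, g x * ∫ y in Ioc 0 x, f y := by
    have : (fun x => g x * ((∫ y in Ioc 0 t, f y) - ∫ y in Ioc 0 x, f y))
        = fun x => g x * (∫ y in Ioc 0 t, f y) - g x * ∫ y in Ioc 0 x, f y := by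
      ext x; ring
    rw [this, integral_sub (hg.mul_const _) hgF, integral_mul_const]
    ring
  rw [swap, hsub]
  ring
section
variable {t : ℝ} {u : ℝ → ℝ}

lemma aesm_pow (hc : ContinuousOn (fun x => ∫ y in Ioc (0:ℝ) x, u y) (Icc 0 t)) (n : ℕ)
    {s : ℝ} (hs : s ∈ Icc 0 t) :
    AEStronglyMeasurable (fun x => (∫ y in Ioc (0:ℝ) x, u y) ^ n)
      (volume.restrict (Ioc 0 s)) :=
  ((hc.mono (Icc_subset_Icc_right hs.2)).pow n).aestronglyMeasurable measurableSet_Icc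
    |>.mono_measure (Measure.restrict_mono Ioc_subset_Icc_self le_rfl)

lemma int_mul_pow (hint : IntegrableOn u (Ioc 0 t) volume)
    (hc : ContinuousOn (fun x => ∫ y in Ioc (0:ℝ) x, u y) (Icc 0 t)) (n : ℕ)
    {s : ℝ} (hs : s ∈ Icc 0 t) :
    IntegrableOn (fun x => u x * (∫ y in Ioc (0:ℝ) x, u y) ^ n) (Ioc 0 s) volume := by
  obtain ⟨K, hK⟩ := (isCompact_Icc (a := (0:ℝ)) (b := t)).exists_bound_of_continuousOn
    ((hc.pow n))
  have hu' : IntegrableOn u (Ioc 0 s) volume := hint.mono_set (Ioc_subset_Ioc_right hs.2)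
  have := hu'.bdd_mul (c := K) (aesm_pow hc n hs) ?_
  · exact this.congr (by filter_upwards with x using mul_comm _ _)
  · filter_upwards [ae_restrict_mem measurableSet_Ioc] with x hx
    exact hK x ⟨hx.1.le, hx.2.trans hs.2⟩

lemma my_pow (hint : IntegrableOn u (Ioc 0 t) volume)
    (hc : ContinuousOn (fun x => ∫ y in Ioc (0:ℝ) x, u y) (Icc 0 t)) (n : ℕ) :
    ∀ s ∈ Icc (0:ℝ) t, (∫ x in Ioc 0 s, u x) ^ (n+1)
      = ((n:ℝ)+1) * ∫ x in Ioc 0 s, u x * (∫ y in Ioc 0 x, u y) ^ n := by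
  induction n with
  | zero => intro s _; simp
  | succ n IH =>
    intro s hs
    set F : ℝ → ℝ := fun x => ∫ y in Ioc (0:ℝ) x, u y with hF
    have hus : IntegrableOn u (Ioc 0 s) volume := hint.mono_set (Ioc_subset_Ioc_right hs.2)
    have hf : IntegrableOn (fun x => ((n:ℝ)+1) * (u x * F x ^ n)) (Ioc 0 s) volume :=
      (int_mul_pow hint hc n hs).const_mul _
    have hprim : ∀ x ∈ Icc (0:ℝ) s, (∫ y in Ioc 0 x, ((n:ℝ)+1) * (u y * F y ^ n)) = F x ^ (n+1) := by
      intro x hx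
      rw [integral_const_mul, ← IH x ⟨hx.1, hx.2.trans hs.2⟩]
    have hgF : IntegrableOn (fun x => u x * ∫ y in Ioc 0 x, ((n:ℝ)+1) * (u y * F y ^ n))
        (Ioc 0 s) volume := by
      apply (int_mul_pow hint hc (n+1) hs).congr_fun _ measurableSet_Ioc
      intro x hx
      show u x * (∫ y in Ioc (0:ℝ) x, u y) ^ (n+1)
          = u x * ∫ y in Ioc 0 x, ((n:ℝ)+1) * (u y * F y ^ n)
      rw [hprim x ⟨hx.1.le, hx.2⟩]
    have key := my_ibp hs.1 (f := fun x => ((n:ℝ)+1) * (u x * F x ^ n)) (g := u) hf hus hgF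
    have e1 : (∫ x in Ioc 0 s, (((n:ℝ)+1) * (u x * F x ^ n)) * ∫ y in Ioc 0 x, u y)
        = ((n:ℝ)+1) * ∫ x in Ioc 0 s, u x * F x ^ (n+1) := by
      rw [← integral_const_mul]
      apply setIntegral_congr_fun measurableSet_Ioc
      intro x _
      show (((n:ℝ)+1) * (u x * F x ^ n)) * F x = ((n:ℝ)+1) * (u x * F x ^ (n+1))
      ring
    have e2 : (∫ x in Ioc 0 s, u x * ∫ y in Ioc 0 x, ((n:ℝ)+1) * (u y * F y ^ n))
        = ∫ x in Ioc 0 s, u x * F x ^ (n+1) := by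
      apply setIntegral_congr_fun measurableSet_Ioc
      intro x hx
      show u x * (∫ y in Ioc 0 x, ((n:ℝ)+1) * (u y * F y ^ n)) = u x * F x ^ (n+1)
      rw [hprim x ⟨hx.1.le, hx.2⟩]
    have e3 : (∫ x in Ioc 0 s, ((n:ℝ)+1) * (u x * F x ^ n)) = F s ^ (n+1) := by
      rw [integral_const_mul, ← IH s hs]
    rw [e1, e2, e3] at key
    have : F s ^ (n+1) * F s = F s ^ (n+1+1) := by ring
    push_cast
    nlinarith [key, this]
end
lemma pow4_nonneg (x : ℝ) : 0 ≤ x ^ 4 := by positivity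
lemma pow8_nonneg (x : ℝ) : 0 ≤ x ^ 8 := by positivity

lemma pt1 (a b : ℝ) (ha : 0 ≤ a) (hb : 0 ≤ b) : a^5 * b^3 ≤ 8*a^8 + b^8/32 := by
  rcases le_or_gt b (2*a) with h | h
  · nlinarith [pow_nonneg ha 5, pow_nonneg hb 3, pow_nonneg ha 8, pow_nonneg hb 8,
      mul_le_mul_of_nonneg_left (pow_le_pow_left₀ hb h 3) (pow_nonneg ha 5)]
  · have h1 : (2*a)^5 ≤ b^5 := pow_le_pow_left₀ (by linarith) h.le 5
    nlinarith [mul_le_mul_of_nonneg_right h1 (pow_nonneg hb 3), pow_nonneg hb 8,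
      pow_nonneg ha 8]

theorem stmt5 :
    ∃ C : ℝ, 0 < C ∧ ∀ t : ℝ, 0 < t → ∀ u : ℝ → ℝ, ∀ M : ℝ, Measurable u →
      (∀ᵐ s ∂(volume.restrict (Set.Ioc 0 t)), |u s| ≤ M) →
      (∫ s in (0:ℝ)..t, (∫ x in (0:ℝ)..s, u x) ^ 8) ≤
        C * t * |∫ x in (0:ℝ)..t, u x| ^ 8 +
        C * M ^ 2 *
          ((1/72 : ℝ) * ∫ s in (0:ℝ)..t, (∫ x in (0:ℝ)..s, (∫ y in (0:ℝ)..x, u y) ^ 3) ^ 2) := by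
  refine ⟨3600, by norm_num, ?_⟩
  intro t ht u M hu hM
  have hint : IntegrableOn u (Ioc 0 t) volume := by
    have hconst : Integrable (fun _ : ℝ => M) (volume.restrict (Ioc 0 t)) := integrable_const M
    exact hconst.mono' hu.aestronglyMeasurable.restrict
      (by filter_upwards [hM] with s hs; simpa using hs)
  set F : ℝ → ℝ := fun x => ∫ y in Ioc (0:ℝ) x, u y with hFdef
  set v : ℝ → ℝ := fun x => ∫ y in Ioc (0:ℝ) x, F y ^ 3 with hvdef
  have hFc : ContinuousOn F (Icc 0 t) :=
    intervalIntegral.continuousOn_primitive ((integrableOn_Icc_iff_integrableOn_Ioc (ha := by finiteness)).2 hint)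
  have hF3int : IntegrableOn (fun x => F x ^ 3) (Icc 0 t) volume := (hFc.pow 3).integrableOn_Icc
  have hvc : ContinuousOn v (Icc 0 t) := intervalIntegral.continuousOn_primitive hF3int
  have hM0 : 0 ≤ M := by
    have hne : (volume.restrict (Ioc (0:ℝ) t)) ≠ 0 := by
      simp only [ne_eq, Measure.restrict_eq_zero, Real.volume_Ioc]
      simp only [ENNReal.ofReal_eq_zero, not_le]
      linarith
    haveI : (ae (volume.restrict (Ioc (0:ℝ) t))).NeBot := ae_neBot.2 hne
    obtain ⟨x, hx⟩ := hM.exists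
    exact (abs_nonneg _).trans hx
  -- rewrite goal integrals into set-integral form
  have eF : ∀ s : ℝ, 0 ≤ s → (∫ x in (0:ℝ)..s, u x) = F s := fun s hs =>
    intervalIntegral.integral_of_le hs
  have eLHS : (∫ s in (0:ℝ)..t, (∫ x in (0:ℝ)..s, u x)^8) = ∫ s in Ioc (0:ℝ) t, F s ^ 8 := by
    rw [intervalIntegral.integral_of_le ht.le]
    exact setIntegral_congr_fun measurableSet_Ioc fun s hs => by rw [eF s hs.1.le]
  have ev : ∀ s : ℝ, 0 ≤ s → (∫ x in (0:ℝ)..s, (∫ y in (0:ℝ)..x, u y)^3) = v s := by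
    intro s hs
    rw [intervalIntegral.integral_of_le hs]
    exact setIntegral_congr_fun measurableSet_Ioc fun x hx => by rw [eF x hx.1.le]
  have eXi : (∫ s in (0:ℝ)..t, (∫ x in (0:ℝ)..s, (∫ y in (0:ℝ)..x, u y)^3)^2)
      = ∫ s in Ioc (0:ℝ) t, v s ^ 2 := by
    rw [intervalIntegral.integral_of_le ht.le]
    exact setIntegral_congr_fun measurableSet_Ioc fun s hs => by rw [ev s hs.1.le]
  rw [eLHS, eXi, eF t ht.le]
  set X := ∫ s in Ioc (0:ℝ) t, F s ^ 8 with hX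
  set V := ∫ s in Ioc (0:ℝ) t, v s ^ 2 with hV
  set A := |F t| with hA
  have hA0 : 0 ≤ A := by rw [hA]; exact abs_nonneg _
  -- integrability facts
  have i1 : IntegrableOn (fun s => F s ^ 8) (Ioc 0 t) volume :=
    (hFc.pow 8).integrableOn_Icc.mono_set Ioc_subset_Icc_self
  have iabs3 : IntegrableOn (fun s => |F s| ^ 3) (Ioc 0 t) volume :=
    ((hFc.abs).pow 3).integrableOn_Icc.mono_set Ioc_subset_Icc_self
  have i2 : IntegrableOn (fun s => v s ^ 2) (Ioc 0 t) volume :=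
    (hvc.pow 2).integrableOn_Icc.mono_set Ioc_subset_Icc_self
  have iuv : IntegrableOn (fun s => u s * F s ^ 4 * v s) (Ioc 0 t) volume := by
    have hb : ContinuousOn (fun s => F s ^ 4 * v s) (Icc 0 t) := (hFc.pow 4).mul hvc
    obtain ⟨K, hK⟩ := isCompact_Icc.exists_bound_of_continuousOn hb
    have h1 := hint.bdd_mul (c := K)
      ((hb.aestronglyMeasurable measurableSet_Icc).mono_measure
        (Measure.restrict_mono Ioc_subset_Icc_self le_rfl)) ?_
    · exact h1.congr (by filter_upwards with x using by ring)
    · filter_upwards [ae_restrict_mem measurableSet_Ioc] with x hx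
      exact hK x ⟨hx.1.le, hx.2⟩
  -- key identity
  have hf5 : IntegrableOn (fun x => (5:ℝ) * (u x * F x ^ 4)) (Ioc 0 t) volume :=
    (int_mul_pow hint hFc 4 ⟨ht.le, le_rfl⟩).const_mul _
  have hg3 : IntegrableOn (fun x => F x ^ 3) (Ioc 0 t) volume :=
    hF3int.mono_set Ioc_subset_Icc_self
  have hprim5 : ∀ x ∈ Icc (0:ℝ) t, (∫ y in Ioc 0 x, (5:ℝ) * (u y * F y ^ 4)) = F x ^ 5 := by
    intro x hx
    rw [integral_const_mul]
    have h4 := my_pow hint hFc 4 x hx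
    push_cast at h4
    linarith
  have hgF : IntegrableOn (fun x => F x ^ 3 * ∫ y in Ioc 0 x, (5:ℝ)*(u y * F y ^ 4))
      (Ioc 0 t) volume := by
    apply (((hFc.pow 3).mul (hFc.pow 5)).integrableOn_Icc.mono_set
      Ioc_subset_Icc_self).congr_fun _ measurableSet_Ioc
    intro x hx
    show F x ^ 3 * F x ^ 5 = F x ^ 3 * ∫ y in Ioc 0 x, (5:ℝ)*(u y * F y ^ 4)
    rw [hprim5 x ⟨hx.1.le, hx.2⟩]
  have key := my_ibp ht.le (f := fun x => (5:ℝ)*(u x * F x ^ 4)) (g := fun x => F x ^ 3)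
    hf5 hg3 hgF
  set W := ∫ s in Ioc (0:ℝ) t, u s * F s ^ 4 * v s with hW
  have k1 : (∫ s in Ioc (0:ℝ) t, ((5:ℝ)*(u s * F s ^ 4)) * ∫ x in Ioc 0 s, F x ^ 3)
      = 5 * W := by
    rw [hW, ← integral_const_mul]
    apply setIntegral_congr_fun measurableSet_Ioc
    intro s _
    show (5:ℝ)*(u s * F s ^ 4) * v s = 5 * (u s * F s ^ 4 * v s)
    ring
  have k2 : (∫ s in Ioc (0:ℝ) t, F s ^ 3 * ∫ x in Ioc 0 s, (5:ℝ)*(u x * F x ^ 4)) = X := by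
    rw [hX]
    apply setIntegral_congr_fun measurableSet_Ioc
    intro s hs
    show F s ^ 3 * (∫ x in Ioc 0 s, (5:ℝ)*(u x * F x ^ 4)) = F s ^ 8
    rw [hprim5 s ⟨hs.1.le, hs.2⟩]; ring
  have kv : (∫ x in Ioc (0:ℝ) t, F x ^ 3) = v t := rfl
  rw [k1, k2, hprim5 t ⟨ht.le, le_rfl⟩, kv] at key
  -- key : 5 * W + X = F t ^ 5 * v t
  have hb1 : A ^ 5 * |v t| ≤ 8 * t * A ^ 8 + X / 32 := by
    have hvt : |v t| ≤ ∫ s in Ioc (0:ℝ) t, |F s| ^ 3 := by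
      have h1 := norm_integral_le_integral_norm (μ := volume.restrict (Ioc (0:ℝ) t))
        (fun s => F s ^ 3)
      simp only [Real.norm_eq_abs, abs_pow] at h1
      exact h1
    have step1 : A ^ 5 * |v t| ≤ A ^ 5 * ∫ s in Ioc (0:ℝ) t, |F s| ^ 3 :=
      mul_le_mul_of_nonneg_left hvt (pow_nonneg hA0 5)
    have step2 : (∫ s in Ioc (0:ℝ) t, A ^ 5 * |F s| ^ 3)
        ≤ ∫ s in Ioc (0:ℝ) t, (8 * A ^ 8 + F s ^ 8 / 32) := by
      apply setIntegral_mono_on (iabs3.const_mul _)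
        ((integrable_const _).add (i1.div_const 32)) measurableSet_Ioc
      intro s _
      show A ^ 5 * |F s| ^ 3 ≤ 8 * A ^ 8 + F s ^ 8 / 32
      have h8 : F s ^ 8 = |F s| ^ 8 := by
        rw [← abs_pow]
        exact (abs_of_nonneg (pow8_nonneg _)).symm
      rw [h8]
      exact pt1 A (|F s|) (abs_nonneg _) (abs_nonneg _)
    have step3 : (∫ s in Ioc (0:ℝ) t, (8 * A ^ 8 + F s ^ 8 / 32)) = 8 * A ^ 8 * t + X / 32 := by
      rw [integral_add (integrable_const _) (i1.div_const 32), setIntegral_const,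
        integral_div, Real.volume_real_Ioc_of_le ht.le]
      simp [ENNReal.toReal_ofReal ht.le, smul_eq_mul]
      ring
    rw [← integral_const_mul] at step1
    linarith
  have hb2 : 5 * |W| ≤ X / 4 + 25 * M ^ 2 * V := by
    have s1 : |W| ≤ ∫ s in Ioc (0:ℝ) t, |u s * F s ^ 4 * v s| := by
      have h1 := norm_integral_le_integral_norm (μ := volume.restrict (Ioc (0:ℝ) t))
        (fun s => u s * F s ^ 4 * v s)
      simpa only [Real.norm_eq_abs] using h1
    have s2 : (∫ s in Ioc (0:ℝ) t, 5 * |u s * F s ^ 4 * v s|)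
        ≤ ∫ s in Ioc (0:ℝ) t, ((1/4) * F s ^ 8 + 25 * M ^ 2 * v s ^ 2) := by
      apply integral_mono_ae (iuv.abs.const_mul 5) ((i1.const_mul _).add (i2.const_mul _))
      filter_upwards [hM] with s hs
      show 5 * |u s * F s ^ 4 * v s| ≤ 1/4 * F s ^ 8 + 25 * M ^ 2 * v s ^ 2
      have habs : |u s * F s ^ 4 * v s| = |u s| * F s ^ 4 * |v s| := by
        rw [abs_mul, abs_mul, abs_of_nonneg (pow4_nonneg (F s))]
      rw [habs]
      have h1 : 0 ≤ F s ^ 4 := pow4_nonneg _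
      have h2 : 0 ≤ |v s| := abs_nonneg _
      have h3 : 0 ≤ |u s| := abs_nonneg _
      have h4 : v s ^ 2 = |v s| ^ 2 := (sq_abs _).symm
      nlinarith [sq_nonneg (F s ^ 4 - 10 * M * |v s|),
        mul_le_mul_of_nonneg_right (mul_le_mul_of_nonneg_right hs h1) h2]
    have s3 : (∫ s in Ioc (0:ℝ) t, ((1/4) * F s ^ 8 + 25 * M ^ 2 * v s ^ 2))
        = X / 4 + 25 * M ^ 2 * V := by
      rw [integral_add (i1.const_mul _) (i2.const_mul _), integral_const_mul, integral_const_mul]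
      rw [hX, hV]; ring
    rw [integral_const_mul] at s2
    linarith
  have hXle : X ≤ A ^ 5 * |v t| + 5 * |W| := by
    have h1 : F t ^ 5 * v t ≤ |F t ^ 5 * v t| := le_abs_self _
    have h2 : -W ≤ |W| := neg_le_abs W
    have h3 : |F t ^ 5 * v t| = A ^ 5 * |v t| := by rw [abs_mul, abs_pow, hA]
    linarith
  have hV0 : 0 ≤ V := setIntegral_nonneg measurableSet_Ioc (fun s _ => sq_nonneg (v s))
  have htA : 0 ≤ t * A ^ 8 := mul_nonneg ht.le (pow_nonneg hA0 8)
  have hMV : 0 ≤ M ^ 2 * V := mul_nonneg (sq_nonneg M) hV0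
  nlinarith [hXle, hb1, hb2, htA, hMV]
end

section
/- There exists C > 0 such that for every t > 0 and every bounded measurable u : (0,t) → ℝ, ‖u₁‖_{L⁴}⁴ ≤ C ‖u‖_{L^∞}² ‖u₂‖_{L²}², where u₁ and u₂ are the first and second iterated primitives of u vanishing at 0. -/
set_option maxHeartbeats 2000000

open MeasureTheory

/-- Iterated primitives of `u` vanishing (iteratively) at `0`. -/
noncomputable def iterPrim (u : ℝ → ℝ) : ℕ → ℝ → ℝ
  | 0 => u
  | (k+1) => fun s => ∫ x in (0:ℝ)..s, iterPrim u k x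

lemma lemA (T : ℝ) (f g : ℝ → ℝ)
    (hf : IntegrableOn f (Set.Ioc 0 T)) (hg : IntegrableOn g (Set.Ioc 0 T)) :
    (∫ x in Set.Ioc 0 T, f x) * (∫ x in Set.Ioc 0 T, g x)
      = (∫ x in Set.Ioc 0 T, f x * ∫ y in Set.Ioc 0 x, g y)
      + ∫ y in Set.Ioc 0 T, (∫ x in Set.Ioc 0 y, f x) * g y := by
  set μ := volume.restrict (Set.Ioc 0 T) with hμ
  have hfg : Integrable (fun p : ℝ × ℝ => f p.1 * g p.2) (μ.prod μ) := hf.mul_prod hg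
  have hs : MeasurableSet {p : ℝ × ℝ | p.2 ≤ p.1} :=
    measurableSet_le measurable_snd measurable_fst
  have hsplit : (∫ x in Set.Ioc 0 T, f x) * (∫ x in Set.Ioc 0 T, g x)
      = (∫ p in {p : ℝ × ℝ | p.2 ≤ p.1}, f p.1 * g p.2 ∂(μ.prod μ))
      + ∫ p in {p : ℝ × ℝ | p.2 ≤ p.1}ᶜ, f p.1 * g p.2 ∂(μ.prod μ) := by
    rw [integral_add_compl hs hfg, integral_prod_mul]
  rw [hsplit]
  congr 1
  · rw [← integral_indicator hs, integral_prod _ (hfg.indicator hs)]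
    apply setIntegral_congr_fun measurableSet_Ioc
    intro x hx
    beta_reduce
    have h1 : (fun y => ({p : ℝ × ℝ | p.2 ≤ p.1}).indicator (fun p => f p.1 * g p.2) (x, y))
        = (Set.Iic x).indicator (fun y => f x * g y) := by
      funext y
      by_cases h : y ≤ x <;> simp [Set.indicator, h]
    rw [h1, integral_indicator measurableSet_Iic, hμ,
      Measure.restrict_restrict measurableSet_Iic]
    have h2 : Set.Iic x ∩ Set.Ioc 0 T = Set.Ioc 0 x := by
      ext y
      simp only [Set.mem_inter_iff, Set.mem_Iic, Set.mem_Ioc]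
      exact ⟨fun ⟨h1, h2, h3⟩ => ⟨h2, h1⟩, fun ⟨h1, h2⟩ => ⟨h2, h1, h2.trans hx.2⟩⟩
    rw [h2, integral_const_mul]
  · rw [← integral_indicator hs.compl, integral_prod_symm _ (hfg.indicator hs.compl)]
    apply setIntegral_congr_fun measurableSet_Ioc
    intro y hy
    beta_reduce
    have h1 : (fun x => ({p : ℝ × ℝ | p.2 ≤ p.1}ᶜ).indicator (fun p => f p.1 * g p.2) (x, y))
        = (Set.Iio y).indicator (fun x => f x * g y) := by
      funext x
      by_cases h : x < y
      · simp [Set.indicator, h, not_le.2 h]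
      · simp [Set.indicator, h, not_lt.1 h]
    rw [h1, integral_indicator measurableSet_Iio, hμ,
      Measure.restrict_restrict measurableSet_Iio]
    have h2 : Set.Iio y ∩ Set.Ioc 0 T = Set.Ioo 0 y := by
      ext x
      simp only [Set.mem_inter_iff, Set.mem_Iio, Set.mem_Ioc, Set.mem_Ioo]
      exact ⟨fun ⟨h1, h2, h3⟩ => ⟨h2, h1⟩, fun ⟨h1, h2⟩ => ⟨h2, h1, (le_of_lt h2).trans hy.2⟩⟩
    rw [h2, Measure.restrict_congr_set Ioo_ae_eq_Ioc, integral_mul_const]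

lemma amgm3 (B x y : ℝ) (hB : 0 ≤ B) (hx : 0 ≤ x) (hy : 0 ≤ y)
    (h : B ^ 3 ≤ x ^ 2 * y) : B ≤ (2 * x + y) / 3 := by
  have hs : (0:ℝ) ≤ (2 * x + y) / 3 := by linarith
  have h3 : B ^ 3 ≤ ((2 * x + y) / 3) ^ 3 := by
    nlinarith [mul_nonneg (sq_nonneg (y - x)) (by linarith : (0:ℝ) ≤ y + 8 * x)]
  exact (pow_le_pow_iff_left₀ hB hs (by norm_num)).1 h3

lemma amgm5 (B x y : ℝ) (hB : 0 ≤ B) (hx : 0 ≤ x) (hy : 0 ≤ y)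
    (h : B ^ 5 ≤ x ^ 3 * y ^ 2) : B ≤ (3 * x + 2 * y) / 5 := by
  have hs : (0:ℝ) ≤ (3 * x + 2 * y) / 5 := by linarith
  have h3 : B ^ 5 ≤ ((3 * x + 2 * y) / 5) ^ 5 := by
    nlinarith [mul_nonneg (sq_nonneg (y - x))
      (by positivity : (0:ℝ) ≤ 243*x^3 + 1296*x^2*y + 304*x*y^2 + 32*y^3)]
  exact (pow_le_pow_iff_left₀ hB hs (by norm_num)).1 h3

theorem stmt8 :
    ∃ C : ℝ, 0 < C ∧ ∀ t : ℝ, 0 < t → ∀ u : ℝ → ℝ, ∀ M : ℝ, Measurable u →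
      (∀ᵐ s ∂(volume.restrict (Set.Ioc 0 t)), |u s| ≤ M) →
      (∫ s in (0:ℝ)..t, (iterPrim u 1 s) ^ 4) ≤
        C * M ^ 2 * ∫ s in (0:ℝ)..t, (iterPrim u 2 s) ^ 2 := by
  refine ⟨196716, by norm_num, ?_⟩
  intro t ht u M hu hbound
  -- M is nonnegative
  have hM0 : 0 ≤ M := by
    by_contra hM
    push_neg at hM
    have h1 : ∀ᵐ s ∂(volume.restrict (Set.Ioc 0 t)), False :=
      hbound.mono fun s hs => absurd (le_trans (abs_nonneg _) hs) (by linarith)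
    have h2 : volume (Set.Ioc (0:ℝ) t) = 0 := by
      rw [ae_iff] at h1
      simpa [Measure.restrict_apply_univ] using h1
    rw [Real.volume_Ioc, sub_zero] at h2
    rw [ENNReal.ofReal_eq_zero] at h2
    linarith
  obtain ⟨u1, hu1d⟩ : ∃ u1 : ℝ → ℝ, u1 = fun s => ∫ y in Set.Ioc 0 s, u y := ⟨_, rfl⟩
  obtain ⟨u2, hu2d⟩ : ∃ u2 : ℝ → ℝ, u2 = fun s => ∫ y in Set.Ioc 0 s, u1 y := ⟨_, rfl⟩
  -- integrability of u
  have hconst : ∀ (c a b : ℝ), IntegrableOn (fun _ => c) (Set.Ioc a b) volume := fun c a b =>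
    integrableOn_const measure_Ioc_lt_top.ne
  have hIntu : IntegrableOn u (Set.Ioc 0 t) := by
    refine Integrable.mono' (hconst M 0 t) hu.aestronglyMeasurable.restrict ?_
    simpa [Real.norm_eq_abs] using hbound
  have hbdsub : ∀ c d : ℝ, Set.Ioc c d ⊆ Set.Ioc 0 t →
      ∀ᵐ x ∂(volume.restrict (Set.Ioc c d)), |u x| ≤ M := fun c d hsub =>
    ae_restrict_of_ae_restrict_of_subset hsub hbound
  -- generic integral bound
  have hIbnd : ∀ (v : ℝ → ℝ) (c d K : ℝ), c ≤ d → IntegrableOn v (Set.Ioc c d) →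
      (∀ᵐ x ∂(volume.restrict (Set.Ioc c d)), |v x| ≤ K) →
      |∫ x in Set.Ioc c d, v x| ≤ K * (d - c) := by
    intro v c d K hcd hint hb
    have h1 : |∫ x in Set.Ioc c d, v x| ≤ ∫ x in Set.Ioc c d, |v x| := by
      simpa [Real.norm_eq_abs] using
        norm_integral_le_integral_norm (μ := volume.restrict (Set.Ioc c d)) v
    have h2 : (∫ x in Set.Ioc c d, |v x|) ≤ ∫ _x in Set.Ioc c d, K :=
      integral_mono_ae hint.abs (hconst K c d) hb
    have h3 : (∫ _x in Set.Ioc c d, K) = K * (d - c) := by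
      rw [setIntegral_const, smul_eq_mul, Real.volume_real_Ioc_of_le hcd,
        mul_comm]
    linarith
  -- splitting of the primitive
  have hsplit1 : ∀ c d : ℝ, 0 ≤ c → c ≤ d → d ≤ t →
      u1 d = u1 c + ∫ x in Set.Ioc c d, u x := by
    intro c d h0c hcd hdt
    have hun : Set.Ioc (0:ℝ) c ∪ Set.Ioc c d = Set.Ioc 0 d := Set.Ioc_union_Ioc_eq_Ioc h0c hcd
    simp only [hu1d]
    rw [← hun, setIntegral_union (Set.Ioc_disjoint_Ioc_of_le le_rfl) measurableSet_Ioc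
      (hIntu.mono_set (Set.Ioc_subset_Ioc_right (hcd.trans hdt)))
      (hIntu.mono_set (Set.Ioc_subset_Ioc h0c hdt))]
  have bd1 : ∀ s, 0 ≤ s → s ≤ t → |u1 s| ≤ M * s := by
    intro s h0 hst
    have h := hIbnd u 0 s M h0 (hIntu.mono_set (Set.Ioc_subset_Ioc_right hst))
      (hbdsub 0 s (Set.Ioc_subset_Ioc_right hst))
    simpa [hu1d] using h
  have l1 : ∀ c d, 0 ≤ c → c ≤ d → d ≤ t → |u1 d - u1 c| ≤ M * (d - c) := by
    intro c d h0c hcd hdt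
    rw [hsplit1 c d h0c hcd hdt]
    simpa using hIbnd u c d M hcd (hIntu.mono_set (Set.Ioc_subset_Ioc h0c hdt))
      (hbdsub c d (Set.Ioc_subset_Ioc h0c hdt))
  -- continuity of u1
  have hcont1 : ContinuousOn u1 (Set.Icc 0 t) := by
    have hlip : LipschitzOnWith (Real.toNNReal M) u1 (Set.Icc 0 t) := by
      rw [lipschitzOnWith_iff_dist_le_mul]
      intro a ha b hb
      rw [Real.dist_eq, Real.dist_eq, Real.coe_toNNReal M hM0]
      rcases le_total b a with hba | hab
      · rw [abs_of_nonneg (by linarith : (0:ℝ) ≤ a - b)]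
        exact l1 b a hb.1 hba ha.2
      · rw [abs_sub_comm (u1 a), abs_sub_comm a,
          abs_of_nonneg (by linarith : (0:ℝ) ≤ b - a)]
        exact l1 a b ha.1 hab hb.2
    exact hlip.continuousOn
  have hIntu1 : IntegrableOn u1 (Set.Ioc 0 t) :=
    (hcont1.integrableOn_Icc).mono_set Set.Ioc_subset_Icc_self
  have hb1 : ∀ c d : ℝ, 0 ≤ c → d ≤ t →
      ∀ᵐ x ∂(volume.restrict (Set.Ioc c d)), |u1 x| ≤ M * t := by
    intro c d h0 hdt
    refine (ae_restrict_iff' measurableSet_Ioc).2 (Filter.Eventually.of_forall fun x hx => ?_)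
    have h1 := bd1 x (le_trans h0 hx.1.le) (hx.2.trans hdt)
    nlinarith [hx.2.trans hdt, le_trans h0 hx.1.le]
  -- u2 facts
  have hsplit2 : ∀ c d : ℝ, 0 ≤ c → c ≤ d → d ≤ t →
      u2 d = u2 c + ∫ x in Set.Ioc c d, u1 x := by
    intro c d h0c hcd hdt
    have hun : Set.Ioc (0:ℝ) c ∪ Set.Ioc c d = Set.Ioc 0 d := Set.Ioc_union_Ioc_eq_Ioc h0c hcd
    simp only [hu2d]
    rw [← hun, setIntegral_union (Set.Ioc_disjoint_Ioc_of_le le_rfl) measurableSet_Ioc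
      (hIntu1.mono_set (Set.Ioc_subset_Ioc_right (hcd.trans hdt)))
      (hIntu1.mono_set (Set.Ioc_subset_Ioc h0c hdt))]
  have bd2 : ∀ s, 0 ≤ s → s ≤ t → |u2 s| ≤ M * t * s := by
    intro s h0 hst
    have h := hIbnd u1 0 s (M * t) h0 (hIntu1.mono_set (Set.Ioc_subset_Ioc_right hst))
      (hb1 0 s le_rfl hst)
    simpa [hu2d] using h
  have l2 : ∀ c d, 0 ≤ c → c ≤ d → d ≤ t → |u2 d - u2 c| ≤ (M * t) * (d - c) := by
    intro c d h0c hcd hdt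
    rw [hsplit2 c d h0c hcd hdt]
    simpa using hIbnd u1 c d (M * t) hcd (hIntu1.mono_set (Set.Ioc_subset_Ioc h0c hdt))
      (hb1 c d h0c hdt)
  have hcont2 : ContinuousOn u2 (Set.Icc 0 t) := by
    have hlip : LipschitzOnWith (Real.toNNReal (M * t)) u2 (Set.Icc 0 t) := by
      rw [lipschitzOnWith_iff_dist_le_mul]
      intro a ha b hb
      rw [Real.dist_eq, Real.dist_eq, Real.coe_toNNReal (M * t) (by positivity)]
      rcases le_total b a with hba | hab
      · rw [abs_of_nonneg (by linarith : (0:ℝ) ≤ a - b)]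
        exact l2 b a hb.1 hba ha.2
      · rw [abs_sub_comm (u2 a), abs_sub_comm a,
          abs_of_nonneg (by linarith : (0:ℝ) ≤ b - a)]
        exact l2 a b ha.1 hab hb.2
    exact hlip.continuousOn
  -- measurability and integrability of products
  have hmu : AEStronglyMeasurable u (volume.restrict (Set.Ioc 0 t)) :=
    hu.aestronglyMeasurable.restrict
  have hm1 : AEStronglyMeasurable u1 (volume.restrict (Set.Ioc 0 t)) :=
    (hcont1.mono Set.Ioc_subset_Icc_self).aestronglyMeasurable measurableSet_Ioc
  have hm2 : AEStronglyMeasurable u2 (volume.restrict (Set.Ioc 0 t)) :=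
    (hcont2.mono Set.Ioc_subset_Icc_self).aestronglyMeasurable measurableSet_Ioc
  have hm1sq : AEStronglyMeasurable (fun x => u1 x ^ 2) (volume.restrict (Set.Ioc 0 t)) :=
    ((hcont1.pow 2).mono Set.Ioc_subset_Icc_self).aestronglyMeasurable measurableSet_Ioc
  have hIntu1p4 : IntegrableOn (fun x => u1 x ^ 4) (Set.Ioc 0 t) :=
    ((hcont1.pow 4).integrableOn_Icc).mono_set Set.Ioc_subset_Icc_self
  have hIntu2sq : IntegrableOn (fun x => u2 x ^ 2) (Set.Ioc 0 t) :=
    ((hcont2.pow 2).integrableOn_Icc).mono_set Set.Ioc_subset_Icc_self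
  have hb1t : ∀ᵐ x ∂(volume.restrict (Set.Ioc 0 t)), |u1 x| ≤ M * t := hb1 0 t le_rfl le_rfl
  have hb2t : ∀ᵐ x ∂(volume.restrict (Set.Ioc 0 t)), |u2 x| ≤ M * t * t := by
    refine (ae_restrict_iff' measurableSet_Ioc).2 (Filter.Eventually.of_forall fun x hx => ?_)
    have h1 := bd2 x hx.1.le hx.2
    nlinarith [hx.2, hx.1.le, mul_nonneg hM0 ht.le]
  have hIntuu1 : IntegrableOn (fun x => u x * u1 x) (Set.Ioc 0 t) := by
    refine Integrable.mono' (hconst (M * (M * t)) 0 t) (hmu.mul hm1) ?_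
    filter_upwards [hbound, hb1t] with x h1 h2
    rw [Real.norm_eq_abs, abs_mul]
    exact mul_le_mul h1 h2 (abs_nonneg _) hM0
  have hIntuu1sq : IntegrableOn (fun x => u x * u1 x ^ 2) (Set.Ioc 0 t) := by
    refine Integrable.mono' (hconst (M * (M * t) ^ 2) 0 t) (hmu.mul hm1sq) ?_
    filter_upwards [hbound, hb1t] with x h1 h2
    rw [Real.norm_eq_abs, abs_mul, abs_pow]
    exact mul_le_mul h1 (by nlinarith [abs_nonneg (u1 x)]) (by positivity) hM0
  have hIntR : IntegrableOn (fun x => u x * u1 x ^ 2 * u2 x) (Set.Ioc 0 t) := by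
    refine Integrable.mono' (hconst (M * (M * t) ^ 2 * (M * t * t)) 0 t)
      ((hmu.mul hm1sq).mul hm2) ?_
    filter_upwards [hbound, hb1t, hb2t] with x h1 h2 h3
    rw [Real.norm_eq_abs, abs_mul, abs_mul, abs_pow]
    have hMt : (0:ℝ) ≤ M * t := by positivity
    refine mul_le_mul (mul_le_mul h1 (by nlinarith [abs_nonneg (u1 x)]) (by positivity) hM0)
      h3 (abs_nonneg _) (by positivity)
  -- the Fubini identities
  have hB2 : ∀ s, 0 ≤ s → s ≤ t → u1 s ^ 2 = 2 * ∫ x in Set.Ioc 0 s, u x * u1 x := by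
    intro s h0 hst
    have hsub : Set.Ioc (0:ℝ) s ⊆ Set.Ioc 0 t := Set.Ioc_subset_Ioc_right hst
    have hA := lemA s u u (hIntu.mono_set hsub) (hIntu.mono_set hsub)
    have e1 : (∫ x in Set.Ioc 0 s, u x * ∫ y in Set.Ioc 0 x, u y)
        = ∫ x in Set.Ioc 0 s, u x * u1 x := by
      apply setIntegral_congr_fun measurableSet_Ioc
      intro x hx
      beta_reduce
      rw [show (∫ y in Set.Ioc 0 x, u y) = u1 x from by simp only [hu1d]]
    have e2 : (∫ y in Set.Ioc 0 s, (∫ x in Set.Ioc 0 y, u x) * u y)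
        = ∫ x in Set.Ioc 0 s, u x * u1 x := by
      apply setIntegral_congr_fun measurableSet_Ioc
      intro y hy
      beta_reduce
      rw [show (∫ x in Set.Ioc 0 y, u x) = u1 y from by simp only [hu1d]]
      ring
    have e0 : (∫ x in Set.Ioc 0 s, u x) = u1 s := by simp only [hu1d]
    rw [e0, e1, e2] at hA
    rw [pow_two]
    linarith
  have hB3 : ∀ s, 0 ≤ s → s ≤ t → u1 s ^ 3 = 3 * ∫ x in Set.Ioc 0 s, u x * u1 x ^ 2 := by
    intro s h0 hst
    have hsub : Set.Ioc (0:ℝ) s ⊆ Set.Ioc 0 t := Set.Ioc_subset_Ioc_right hst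
    have hA := lemA s u (fun x => u x * u1 x) (hIntu.mono_set hsub) (hIntuu1.mono_set hsub)
    beta_reduce at hA
    have e1 : (∫ x in Set.Ioc 0 s, u x * ∫ y in Set.Ioc 0 x, u y * u1 y)
        = ∫ x in Set.Ioc 0 s, (1/2) * (u x * u1 x ^ 2) := by
      apply setIntegral_congr_fun measurableSet_Ioc
      intro x hx
      beta_reduce
      rw [show (∫ y in Set.Ioc 0 x, u y * u1 y) = u1 x ^ 2 / 2 from by
        linarith [hB2 x hx.1.le (hx.2.trans hst)]]
      ring
    have e2 : (∫ y in Set.Ioc 0 s, (∫ x in Set.Ioc 0 y, u x) * (u y * u1 y))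
        = ∫ y in Set.Ioc 0 s, u y * u1 y ^ 2 := by
      apply setIntegral_congr_fun measurableSet_Ioc
      intro y hy
      beta_reduce
      rw [show (∫ x in Set.Ioc 0 y, u x) = u1 y from by simp only [hu1d]]
      ring
    have e0 : (∫ x in Set.Ioc 0 s, u x) = u1 s := by simp only [hu1d]
    have e3 : (∫ x in Set.Ioc 0 s, u x * u1 x) = u1 s ^ 2 / 2 := by
      linarith [hB2 s h0 hst]
    rw [e0, e1, e2, e3, integral_const_mul] at hA
    have e4 : (∫ y in Set.Ioc 0 s, u y * u1 y ^ 2) = ∫ x in Set.Ioc 0 s, u x * u1 x ^ 2 := rfl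
    rw [e4] at hA
    nlinarith [hA]
  have hIBP : u2 t * u1 t ^ 3
      = (∫ x in Set.Ioc 0 t, u1 x ^ 4) + 3 * ∫ x in Set.Ioc 0 t, u x * u1 x ^ 2 * u2 x := by
    have hA := lemA t u1 (fun x => u x * u1 x ^ 2) hIntu1 hIntuu1sq
    beta_reduce at hA
    have e0 : (∫ x in Set.Ioc 0 t, u1 x) = u2 t := by simp only [hu2d]
    have e3 : (∫ x in Set.Ioc 0 t, u x * u1 x ^ 2) = u1 t ^ 3 / 3 := by
      linarith [hB3 t ht.le le_rfl]
    have e1 : (∫ x in Set.Ioc 0 t, u1 x * ∫ y in Set.Ioc 0 x, u y * u1 y ^ 2)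
        = ∫ x in Set.Ioc 0 t, (1/3) * u1 x ^ 4 := by
      apply setIntegral_congr_fun measurableSet_Ioc
      intro x hx
      beta_reduce
      rw [show (∫ y in Set.Ioc 0 x, u y * u1 y ^ 2) = u1 x ^ 3 / 3 from by
        linarith [hB3 x hx.1.le hx.2]]
      ring
    have e2 : (∫ y in Set.Ioc 0 t, (∫ x in Set.Ioc 0 y, u1 x) * (u y * u1 y ^ 2))
        = ∫ y in Set.Ioc 0 t, u y * u1 y ^ 2 * u2 y := by
      apply setIntegral_congr_fun measurableSet_Ioc
      intro y hy
      beta_reduce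
      rw [show (∫ x in Set.Ioc 0 y, u1 x) = u2 y from by simp only [hu2d]]
      ring
    rw [e0, e3, e1, e2, integral_const_mul] at hA
    have e4 : (∫ y in Set.Ioc 0 t, u y * u1 y ^ 2 * u2 y)
        = ∫ x in Set.Ioc 0 t, u x * u1 x ^ 2 * u2 x := rfl
    rw [e4] at hA
    nlinarith [hA]
  -- nonnegativity
  have hFnn : 0 ≤ ∫ x in Set.Ioc 0 t, u1 x ^ 4 :=
    setIntegral_nonneg measurableSet_Ioc fun x _ => by positivity
  have hGnn : 0 ≤ ∫ x in Set.Ioc 0 t, u2 x ^ 2 :=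
    setIntegral_nonneg measurableSet_Ioc fun x _ => by positivity
  -- bound on the remainder term
  have hRbound : -(3 * ∫ x in Set.Ioc 0 t, u x * u1 x ^ 2 * u2 x)
      ≤ (∫ x in Set.Ioc 0 t, u1 x ^ 4) / 4
        + 9 * M ^ 2 * ∫ x in Set.Ioc 0 t, u2 x ^ 2 := by
    have h1 : (∫ x in Set.Ioc 0 t, (-3) * (u x * u1 x ^ 2 * u2 x))
        ≤ ∫ x in Set.Ioc 0 t, (u1 x ^ 4 / 4 + 9 * M ^ 2 * u2 x ^ 2) := by
      refine integral_mono_ae (hIntR.const_mul (-3))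
        ((hIntu1p4.div_const 4).add (hIntu2sq.const_mul (9 * M ^ 2))) ?_
      filter_upwards [hbound] with x hx
      rcases le_total 0 (u2 x) with h2 | h2
      · nlinarith [sq_nonneg (u1 x ^ 2 / 2 - 3 * M * u2 x),
          mul_nonneg (mul_nonneg (by linarith [(abs_le.1 hx).1] : (0:ℝ) ≤ M + u x) h2)
            (sq_nonneg (u1 x))]
      · nlinarith [sq_nonneg (u1 x ^ 2 / 2 + 3 * M * u2 x),
          mul_nonneg (mul_nonneg (by linarith [(abs_le.1 hx).2] : (0:ℝ) ≤ M - u x)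
            (by linarith : (0:ℝ) ≤ -u2 x)) (sq_nonneg (u1 x))]
    rw [integral_const_mul] at h1
    rw [integral_add (hIntu1p4.div_const 4) (hIntu2sq.const_mul (9 * M ^ 2)),
      integral_div, integral_const_mul] at h1
    linarith
  have hu1t : |u1 t| ≤ M * t := bd1 t ht.le le_rfl
  have hu2t : |u2 t| ≤ M * t * t := bd2 t ht.le le_rfl
  -- key lower bound (i): a^5 ≤ 32 M F
  have hi : |u1 t| ^ 5 ≤ 32 * M * ∫ x in Set.Ioc 0 t, u1 x ^ 4 := by
    rcases eq_or_lt_of_le (abs_nonneg (u1 t)) with h0 | ha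
    · rw [← h0]
      have : (0:ℝ) ^ 5 = 0 := by norm_num
      rw [this]
      exact mul_nonneg (mul_nonneg (by norm_num) hM0) hFnn
    · have hMpos : 0 < M := by
        rcases lt_or_ge 0 M with h | h
        · exact h
        · exfalso; nlinarith [hu1t, mul_nonneg (neg_nonneg.2 h) ht.le]
      have hδle : |u1 t| / (2 * M) ≤ t := by
        rw [div_le_iff₀ (by positivity)]
        nlinarith [hu1t, ht]
      have key : ∀ x ∈ Set.Ioc (t - |u1 t| / (2 * M)) t, (|u1 t| / 2) ^ 4 ≤ u1 x ^ 4 := by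
        intro x hx
        have hx0 : 0 ≤ x := le_trans (by linarith) hx.1.le
        have hl := l1 x t hx0 hx.2 le_rfl
        have habs : |u1 t| - |u1 x| ≤ |u1 t - u1 x| := abs_sub_abs_le_abs_sub _ _
        have h5 : M * (t - x) ≤ |u1 t| / 2 := by
          have h6 : t - x ≤ |u1 t| / (2 * M) := by linarith [hx.1]
          calc M * (t - x) ≤ M * (|u1 t| / (2 * M)) :=
                mul_le_mul_of_nonneg_left h6 hMpos.le
            _ = |u1 t| / 2 := by
                rw [mul_div_assoc', mul_comm 2 M, mul_div_mul_left _ _ (ne_of_gt hMpos)]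
        have h4 : |u1 t| / 2 ≤ |u1 x| := by linarith
        calc (|u1 t| / 2) ^ 4 ≤ |u1 x| ^ 4 := pow_le_pow_left₀ (by positivity) h4 4
          _ = u1 x ^ 4 := by
            rw [← abs_pow]
            exact abs_of_nonneg (by positivity)
      have hsub : Set.Ioc (t - |u1 t| / (2 * M)) t ⊆ Set.Ioc 0 t :=
        Set.Ioc_subset_Ioc (by linarith) le_rfl
      have hlow := setIntegral_ge_of_const_le_real (μ := volume) measurableSet_Ioc
        measure_Ioc_lt_top.ne key (hIntu1p4.mono_set hsub)
      rw [Real.volume_real_Ioc_of_le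
        (by have : 0 ≤ |u1 t| / (2 * M) := by positivity
            linarith)] at hlow
      have hmono : (∫ x in Set.Ioc (t - |u1 t| / (2 * M)) t, u1 x ^ 4)
          ≤ ∫ x in Set.Ioc 0 t, u1 x ^ 4 :=
        setIntegral_mono_set hIntu1p4 (Filter.Eventually.of_forall fun x => by positivity)
          (HasSubset.Subset.eventuallyLE hsub)
      have heq : (|u1 t| / 2) ^ 4 * (t - (t - |u1 t| / (2 * M))) = |u1 t| ^ 5 / (32 * M) := by
        field_simp
        ring
      rw [heq] at hlow
      rw [div_le_iff₀ (by positivity)] at hlow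
      nlinarith [hlow, hmono, hMpos]
  -- boundary term bound
  have hBnd : |u2 t| * |u1 t| ^ 3
      ≤ 2 / 3 * (∫ x in Set.Ioc 0 t, u1 x ^ 4)
        + 16384 * M ^ 2 * ∫ x in Set.Ioc 0 t, u2 x ^ 2 := by
    have hM2G : (0:ℝ) ≤ M ^ 2 * ∫ x in Set.Ioc 0 t, u2 x ^ 2 :=
      mul_nonneg (sq_nonneg M) hGnn
    rcases eq_or_lt_of_le (abs_nonneg (u1 t)) with ha0 | ha
    · rw [← ha0]
      have : (0:ℝ) ^ 3 = 0 := by norm_num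
      rw [this, mul_zero]
      nlinarith [hFnn, hM2G]
    rcases eq_or_lt_of_le (abs_nonneg (u2 t)) with hb0 | hb
    · rw [← hb0, zero_mul]
      nlinarith [hFnn, hM2G]
    have hMpos : 0 < M := by
      rcases lt_or_ge 0 M with h | h
      · exact h
      · exfalso; nlinarith [hu1t, mul_nonneg (neg_nonneg.2 h) ht.le]
    obtain ⟨h, hhdef⟩ : ∃ h : ℝ, h = min (|u2 t| / (4 * |u1 t|)) (Real.sqrt (|u2 t| / (4 * M))) := ⟨_, rfl⟩
    have hhpos : 0 < h := hhdef ▸ lt_min (by positivity) (Real.sqrt_pos.2 (by positivity))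
    have hh2 : h ^ 2 ≤ |u2 t| / (4 * M) := by
      have h1 : h ≤ Real.sqrt (|u2 t| / (4 * M)) := le_trans (le_of_eq hhdef) (min_le_right _ _)
      nlinarith [Real.sq_sqrt (le_of_lt (show (0:ℝ) < |u2 t| / (4 * M) by positivity)),
        Real.sqrt_nonneg (|u2 t| / (4 * M)), hhpos]
    have hha : h * |u1 t| ≤ |u2 t| / 4 := by
      have h1 : h ≤ |u2 t| / (4 * |u1 t|) := le_trans (le_of_eq hhdef) (min_le_left _ _)
      rw [le_div_iff₀ (by positivity)] at h1
      linarith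
    have hht : h ≤ t := by
      have hBq : |u2 t| / (4 * M) ≤ t ^ 2 := by
        rw [div_le_iff₀ (by positivity)]
        nlinarith [hu2t]
      have hsq : h ^ 2 ≤ t ^ 2 := le_trans hh2 hBq
      exact (pow_le_pow_iff_left₀ hhpos.le ht.le (by norm_num)).1 hsq
    have hlow2 : ∀ x ∈ Set.Ioc (t - h) t, (|u2 t| / 2) ^ 2 ≤ u2 x ^ 2 := by
      intro x hx
      have hx0 : 0 ≤ x := le_trans (by linarith) hx.1.le
      have hd : u2 t = u2 x + ∫ y in Set.Ioc x t, u1 y := hsplit2 x t hx0 hx.2 le_rfl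
      have hub : ∀ᵐ y ∂(volume.restrict (Set.Ioc x t)), |u1 y| ≤ |u1 t| + M * h := by
        refine (ae_restrict_iff' measurableSet_Ioc).2
          (Filter.Eventually.of_forall fun y hy => ?_)
        have hy0 : 0 ≤ y := le_trans hx0 hy.1.le
        have hl := l1 y t hy0 hy.2 le_rfl
        have habs : |u1 y| - |u1 t| ≤ |u1 t - u1 y| := by
          rw [abs_sub_comm]
          exact abs_sub_abs_le_abs_sub _ _
        have : M * (t - y) ≤ M * h := mul_le_mul_of_nonneg_left (by linarith [hy.1, hx.1]) hMpos.le
        linarith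
      have hint := hIbnd u1 x t (|u1 t| + M * h) hx.2
        (hIntu1.mono_set (Set.Ioc_subset_Ioc hx0 le_rfl)) hub
      have hIabs : |∫ y in Set.Ioc x t, u1 y| ≤ |u2 t| / 2 := by
        have h7 : (|u1 t| + M * h) * (t - x) ≤ (|u1 t| + M * h) * h :=
          mul_le_mul_of_nonneg_left (by linarith [hx.1]) (by positivity)
        have h8 : (|u1 t| + M * h) * h = |u1 t| * h + M * h ^ 2 := by ring
        have h9 : M * h ^ 2 ≤ |u2 t| / 4 := by
          have := mul_le_mul_of_nonneg_left hh2 hMpos.le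
          calc M * h ^ 2 ≤ M * (|u2 t| / (4 * M)) := this
            _ = |u2 t| / 4 := by
                rw [mul_div_assoc', mul_comm 4 M, mul_div_mul_left _ _ (ne_of_gt hMpos)]
        linarith [hint, hha]
      have h10 : |u2 t| - |u2 x| ≤ |u2 t - u2 x| := abs_sub_abs_le_abs_sub _ _
      have h11 : |u2 t - u2 x| = |∫ y in Set.Ioc x t, u1 y| := by
        rw [hd, add_sub_cancel_left]
      have h12 : |u2 t| / 2 ≤ |u2 x| := by
        rw [h11] at h10; linarith [hIabs]
      calc (|u2 t| / 2) ^ 2 ≤ |u2 x| ^ 2 := pow_le_pow_left₀ (by positivity) h12 2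
        _ = u2 x ^ 2 := sq_abs _
    have hsub : Set.Ioc (t - h) t ⊆ Set.Ioc 0 t := Set.Ioc_subset_Ioc (by linarith) le_rfl
    have hGlow := setIntegral_ge_of_const_le_real (μ := volume) measurableSet_Ioc
      measure_Ioc_lt_top.ne hlow2 (hIntu2sq.mono_set hsub)
    rw [Real.volume_real_Ioc_of_le (by linarith)] at hGlow
    have hmono : (∫ x in Set.Ioc (t - h) t, u2 x ^ 2) ≤ ∫ x in Set.Ioc 0 t, u2 x ^ 2 :=
      setIntegral_mono_set hIntu2sq (Filter.Eventually.of_forall fun x => by positivity)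
        (HasSubset.Subset.eventuallyLE hsub)
    have hG : (|u2 t| / 2) ^ 2 * h ≤ ∫ x in Set.Ioc 0 t, u2 x ^ 2 := by
      have : t - (t - h) = h := by ring
      rw [this] at hGlow
      linarith
    rcases le_total (|u2 t| / (4 * |u1 t|)) (Real.sqrt (|u2 t| / (4 * M))) with hc | hc
    · -- h = b/(4a), case b^3 ≤ 16 a G
      have hh : h = |u2 t| / (4 * |u1 t|) := hhdef.trans (min_eq_left hc)
      have hbG : |u2 t| ^ 3 ≤ 16 * |u1 t| * ∫ x in Set.Ioc 0 t, u2 x ^ 2 := by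
        have egen : ∀ a' b' : ℝ, 0 < a' → 16 * a' * ((b' / 2) ^ 2 * (b' / (4 * a'))) = b' ^ 3 := by
          intro a' b' ha'
          field_simp
          ring
        have e := egen (|u1 t|) (|u2 t|) ha
        rw [hh] at hG
        nlinarith [mul_le_mul_of_nonneg_left hG (by positivity : (0:ℝ) ≤ 16 * |u1 t|)]
      have s2 : (|u1 t| ^ 5) ^ 2 ≤ (32 * M * ∫ x in Set.Ioc 0 t, u1 x ^ 4) ^ 2 :=
        pow_le_pow_left₀ (by positivity) hi 2
      have hcube : (|u2 t| * |u1 t| ^ 3) ^ 3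
          ≤ (∫ x in Set.Ioc 0 t, u1 x ^ 4) ^ 2
            * (16384 * M ^ 2 * ∫ x in Set.Ioc 0 t, u2 x ^ 2) := by
        have s1 : |u2 t| ^ 3 * |u1 t| ^ 9
            ≤ 16 * |u1 t| * (∫ x in Set.Ioc 0 t, u2 x ^ 2) * |u1 t| ^ 9 :=
          mul_le_mul_of_nonneg_right hbG (by positivity)
        have s3 : 16 * |u1 t| * (∫ x in Set.Ioc 0 t, u2 x ^ 2) * |u1 t| ^ 9
            = 16 * (|u1 t| ^ 5) ^ 2 * ∫ x in Set.Ioc 0 t, u2 x ^ 2 := by ring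
        have s4 : 16 * (|u1 t| ^ 5) ^ 2 * (∫ x in Set.Ioc 0 t, u2 x ^ 2)
            ≤ 16 * (32 * M * ∫ x in Set.Ioc 0 t, u1 x ^ 4) ^ 2
              * ∫ x in Set.Ioc 0 t, u2 x ^ 2 := by
          apply mul_le_mul_of_nonneg_right _ hGnn
          linarith [s2]
        calc (|u2 t| * |u1 t| ^ 3) ^ 3 = |u2 t| ^ 3 * |u1 t| ^ 9 := by ring
          _ ≤ 16 * (32 * M * ∫ x in Set.Ioc 0 t, u1 x ^ 4) ^ 2
              * ∫ x in Set.Ioc 0 t, u2 x ^ 2 := by linarith [s1, s3 ▸ s1, s4]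
          _ = (∫ x in Set.Ioc 0 t, u1 x ^ 4) ^ 2
              * (16384 * M ^ 2 * ∫ x in Set.Ioc 0 t, u2 x ^ 2) := by ring
      have := amgm3 (|u2 t| * |u1 t| ^ 3) (∫ x in Set.Ioc 0 t, u1 x ^ 4)
        (16384 * M ^ 2 * ∫ x in Set.Ioc 0 t, u2 x ^ 2) (by positivity) hFnn
        (by positivity) hcube
      linarith [hM2G]
    · -- h = sqrt(b/(4M)), case b^5 ≤ 64 M G^2
      have hh : h = Real.sqrt (|u2 t| / (4 * M)) := hhdef.trans (min_eq_right hc)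
      have hsq : h ^ 2 = |u2 t| / (4 * M) := by
        rw [hh, Real.sq_sqrt (by positivity)]
      have hG2 : (|u2 t| ^ 2 / 4) ^ 2 * (|u2 t| / (4 * M))
          ≤ (∫ x in Set.Ioc 0 t, u2 x ^ 2) ^ 2 := by
        have h0 : (0:ℝ) ≤ (|u2 t| / 2) ^ 2 * h := by positivity
        nlinarith [hG, hsq, h0]
      have hbG : |u2 t| ^ 5 ≤ 64 * M * (∫ x in Set.Ioc 0 t, u2 x ^ 2) ^ 2 := by
        have egen : ∀ m' b' : ℝ, 0 < m' → 64 * m' * ((b' ^ 2 / 4) ^ 2 * (b' / (4 * m'))) = b' ^ 5 := by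
          intro m' b' hm'
          field_simp
          ring
        have e := egen M (|u2 t|) hMpos
        nlinarith [mul_le_mul_of_nonneg_left hG2 (by positivity : (0:ℝ) ≤ 64 * M)]
      have s2 : (|u1 t| ^ 5) ^ 3 ≤ (32 * M * ∫ x in Set.Ioc 0 t, u1 x ^ 4) ^ 3 :=
        pow_le_pow_left₀ (by positivity) hi 3
      have hquint : (|u2 t| * |u1 t| ^ 3) ^ 5
          ≤ (∫ x in Set.Ioc 0 t, u1 x ^ 4) ^ 3
            * (1449 * M ^ 2 * ∫ x in Set.Ioc 0 t, u2 x ^ 2) ^ 2 := by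
        have s1 : |u2 t| ^ 5 * (|u1 t| ^ 5) ^ 3
            ≤ 64 * M * (∫ x in Set.Ioc 0 t, u2 x ^ 2) ^ 2
              * (32 * M * ∫ x in Set.Ioc 0 t, u1 x ^ 4) ^ 3 :=
          mul_le_mul hbG s2 (by positivity) (by positivity)
        have s5 : 64 * M * (∫ x in Set.Ioc 0 t, u2 x ^ 2) ^ 2
              * (32 * M * ∫ x in Set.Ioc 0 t, u1 x ^ 4) ^ 3
            ≤ (∫ x in Set.Ioc 0 t, u1 x ^ 4) ^ 3
              * (1449 * M ^ 2 * ∫ x in Set.Ioc 0 t, u2 x ^ 2) ^ 2 := by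
          nlinarith [mul_nonneg (mul_nonneg (pow_nonneg hM0 4)
            (pow_nonneg hFnn 3)) (sq_nonneg (∫ x in Set.Ioc 0 t, u2 x ^ 2))]
        calc (|u2 t| * |u1 t| ^ 3) ^ 5 = |u2 t| ^ 5 * (|u1 t| ^ 5) ^ 3 := by ring
          _ ≤ 64 * M * (∫ x in Set.Ioc 0 t, u2 x ^ 2) ^ 2
              * (32 * M * ∫ x in Set.Ioc 0 t, u1 x ^ 4) ^ 3 := s1
          _ ≤ _ := s5
      have := amgm5 (|u2 t| * |u1 t| ^ 3) (∫ x in Set.Ioc 0 t, u1 x ^ 4)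
        (1449 * M ^ 2 * ∫ x in Set.Ioc 0 t, u2 x ^ 2) (by positivity) hFnn
        (by positivity) hquint
      linarith [hM2G]
  -- assemble
  have habs3 : u2 t * u1 t ^ 3 ≤ |u2 t| * |u1 t| ^ 3 := by
    calc u2 t * u1 t ^ 3 ≤ |u2 t * u1 t ^ 3| := le_abs_self _
      _ = |u2 t| * |u1 t| ^ 3 := by rw [abs_mul, abs_pow]
  have hfinal : (∫ x in Set.Ioc 0 t, u1 x ^ 4)
      ≤ 196716 * M ^ 2 * ∫ x in Set.Ioc 0 t, u2 x ^ 2 := by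
    linarith [hIBP, hRbound, habs3, hBnd]
  -- convert the goal
  have goal1 : (∫ s in (0:ℝ)..t, (iterPrim u 1 s) ^ 4) = ∫ x in Set.Ioc 0 t, u1 x ^ 4 := by
    rw [intervalIntegral.integral_of_le ht.le]
    apply setIntegral_congr_fun measurableSet_Ioc
    intro s hs
    beta_reduce
    have : iterPrim u 1 s = u1 s := by
      show (∫ x in (0:ℝ)..s, iterPrim u 0 x) = u1 s
      simp only [iterPrim]
      rw [intervalIntegral.integral_of_le hs.1.le]
      simp only [hu1d]
    rw [this]
  have goal2 : (∫ s in (0:ℝ)..t, (iterPrim u 2 s) ^ 2) = ∫ x in Set.Ioc 0 t, u2 x ^ 2 := by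
    rw [intervalIntegral.integral_of_le ht.le]
    apply setIntegral_congr_fun measurableSet_Ioc
    intro s hs
    beta_reduce
    have h1 : iterPrim u 2 s = ∫ x in Set.Ioc 0 s, iterPrim u 1 x := by
      show (∫ x in (0:ℝ)..s, iterPrim u 1 x) = _
      rw [intervalIntegral.integral_of_le hs.1.le]
    have h2 : (∫ x in Set.Ioc 0 s, iterPrim u 1 x) = ∫ x in Set.Ioc 0 s, u1 x := by
      apply setIntegral_congr_fun measurableSet_Ioc
      intro x hx
      show (∫ y in (0:ℝ)..x, iterPrim u 0 y) = u1 x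
      simp only [iterPrim]
      rw [intervalIntegral.integral_of_le hx.1.le]
      simp only [hu1d]
    have h3 : (∫ x in Set.Ioc 0 s, u1 x) = u2 s := by simp only [hu2d]
    rw [h1, h2, h3]
  rw [goal1, goal2]
  exact hfinal
end

section
/- There exists C > 0 such that for every t > 0 and every bounded measurable u : (0,t) → ℝ, ‖u₁‖_{L⁶}⁶ ≤ C ‖u‖_{L^∞}⁴ ‖u₃‖_{L²}², where u₁ and u₃ are the first and third iterated primitives of u vanishing at 0. -/
open MeasureTheory

open intervalIntegral Set

lemma poly_moment (ℓ A B C : ℝ) (hl : ℓ ≠ 0) :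
    ∫ h in (0:ℝ)..ℓ, (A - B*h + C*h^2/2) * (30 - 180*(h/ℓ) + 180*(h/ℓ)^2) = C*ℓ^3/2 := by
  set c1 : ℝ := 30*A with hc1
  set c2 : ℝ := -(90*A/ℓ) - 15*B with hc2
  set c3 : ℝ := 60*A/ℓ^2 + 60*B/ℓ + 5*C with hc3
  set c4 : ℝ := -(45*B/ℓ^2) - 45*C/(2*ℓ) with hc4
  set c5 : ℝ := 18*C/ℓ^2 with hc5
  have hd : ∀ x : ℝ, HasDerivAt (fun h : ℝ => c1*h + c2*h^2 + c3*h^3 + c4*h^4 + c5*h^5)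
      ((A - B*x + C*x^2/2) * (30 - 180*(x/ℓ) + 180*(x/ℓ)^2)) x := by
    intro x
    have H := (((hasDerivAt_id x).const_mul c1).add
        (((hasDerivAt_pow 2 x).const_mul c2).add
        (((hasDerivAt_pow 3 x).const_mul c3).add
        (((hasDerivAt_pow 4 x).const_mul c4).add
        ((hasDerivAt_pow 5 x).const_mul c5)))))
    refine (H.congr_deriv ?_).congr_of_eventuallyEq (Filter.Eventually.of_forall fun h => ?_)
    · rw [hc1, hc2, hc3, hc4, hc5]; push_cast; field_simp; ring
    · simp [id]; ring
  have hcont : IntervalIntegrable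
      (fun h : ℝ => (A - B*h + C*h^2/2) * (30 - 180*(h/ℓ) + 180*(h/ℓ)^2)) volume 0 ℓ := by
    apply Continuous.intervalIntegrable
    fun_prop
  have hI := intervalIntegral.integral_eq_sub_of_hasDerivAt (fun x _ => hd x) hcont
  rw [hI, hc1, hc2, hc3, hc4, hc5]
  field_simp
  ring

set_option maxHeartbeats 1000000 in
lemma key (t : ℝ) (ht : 0 < t) (u : ℝ → ℝ) (M : ℝ) (hM : 0 < M)
    (hu : Measurable u)
    (hbd : ∀ᵐ s ∂(volume.restrict (Set.Ioc 0 t)), |u s| ≤ M) :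
    (∫ s in (0:ℝ)..t, (iterPrim u 1 s) ^ 6) ≤
      (2000000000 : ℝ) * M ^ 4 * ∫ s in (0:ℝ)..t, (iterPrim u 3 s) ^ 2 := by
  have ht' : (0:ℝ) ≤ t := ht.le
  set u1 : ℝ → ℝ := fun s => ∫ x in (0:ℝ)..s, u x with hu1def
  set u2 : ℝ → ℝ := fun s => ∫ x in (0:ℝ)..s, u1 x with hu2def
  set u3 : ℝ → ℝ := fun s => ∫ x in (0:ℝ)..s, u2 x with hu3def
  have hiter1 : iterPrim u 1 = u1 := by
    funext s; simp [iterPrim, hu1def]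
  have hiter3 : iterPrim u 3 = u3 := by
    funext s; simp [iterPrim, hu1def, hu2def, hu3def]
  rw [hiter1, hiter3]
  -- integrability of u on subintervals of [0, t]
  have hbd' : ∀ᵐ s ∂(volume.restrict (Set.Ioc 0 t)), ‖u s‖ ≤ M := by
    simpa [Real.norm_eq_abs] using hbd
  have hIu : IntegrableOn u (Ioc 0 t) := by
    exact Integrable.mono' (integrable_const M) hu.aestronglyMeasurable.restrict hbd'
  have hIu' : ∀ {x y : ℝ}, 0 ≤ x → x ≤ y → y ≤ t → IntervalIntegrable u volume x y := by
    intro x y hx hxy hyt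
    rw [intervalIntegrable_iff_integrableOn_Ioc_of_le hxy]
    exact hIu.mono_set (Ioc_subset_Ioc hx hyt)
  have hu1_sub : ∀ {x y : ℝ}, 0 ≤ x → x ≤ y → y ≤ t → u1 y - u1 x = ∫ s in x..y, u s := by
    intro x y hx hxy hyt
    have h1 := integral_add_adjacent_intervals (hIu' le_rfl hx (hxy.trans hyt))
      (hIu' hx hxy hyt)
    simp only [hu1def]
    linarith
  have hu1_lip : ∀ {x y : ℝ}, 0 ≤ x → x ≤ y → y ≤ t → |u1 y - u1 x| ≤ M * (y - x) := by
    intro x y hx hxy hyt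
    rw [hu1_sub hx hxy hyt]
    have hae : ∀ᵐ s ∂(volume.restrict (Set.uIoc x y)), ‖u s‖ ≤ M := by
      refine ae_restrict_of_ae_restrict_of_subset ?_ hbd'
      rw [uIoc_of_le hxy]; exact Ioc_subset_Ioc hx hyt
    have h2 := intervalIntegral.norm_integral_le_abs_of_norm_le (g := fun _ => M) hae
      intervalIntegrable_const
    rw [Real.norm_eq_abs] at h2
    refine h2.trans ?_
    rw [intervalIntegral.integral_const, smul_eq_mul,
      abs_of_nonneg (by nlinarith : (0:ℝ) ≤ (y - x) * M)]
    nlinarith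
  have hu1_lip2 : ∀ {x y : ℝ}, x ∈ Icc (0:ℝ) t → y ∈ Icc (0:ℝ) t → |u1 x - u1 y| ≤ M * |x - y| := by
    intro x y hx hy
    rcases le_total x y with h | h
    · rw [abs_sub_comm (u1 x), abs_sub_comm x, abs_of_nonneg (sub_nonneg.2 h)]
      exact hu1_lip hx.1 h hy.2
    · rw [abs_of_nonneg (sub_nonneg.2 h)]
      exact hu1_lip hy.1 h hx.2
  have hu10 : u1 0 = 0 := by simp [hu1def]
  have hu1_bd : ∀ s ∈ Icc (0:ℝ) t, |u1 s| ≤ M * s := by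
    intro s hs
    have := hu1_lip le_rfl hs.1 hs.2
    simpa [hu10] using this
  -- continuity of u1 on [0, t]
  have lip_cont : ∀ (f : ℝ → ℝ) (K : ℝ), 0 < K →
      (∀ {x y : ℝ}, x ∈ Icc (0:ℝ) t → y ∈ Icc (0:ℝ) t → |f x - f y| ≤ K * |x - y|) →
      ContinuousOn f (Icc (0:ℝ) t) := by
    intro f K hK hf
    have : LipschitzOnWith (Real.toNNReal K) f (Icc (0:ℝ) t) := by
      rw [lipschitzOnWith_iff_dist_le_mul]
      intro x hx y hy
      rw [Real.dist_eq, Real.dist_eq, Real.coe_toNNReal K hK.le]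
      exact hf hx hy
    exact this.continuousOn
  have hu1_cont : ContinuousOn u1 (Icc (0:ℝ) t) := lip_cont u1 M hM hu1_lip2
  have hIu1 : ∀ {x y : ℝ}, x ∈ Icc (0:ℝ) t → y ∈ Icc (0:ℝ) t →
      IntervalIntegrable u1 volume x y := by
    intro x y hx hy
    exact (hu1_cont.mono (uIcc_subset_Icc hx hy)).intervalIntegrable
  have hu2_sub : ∀ {x y : ℝ}, 0 ≤ x → x ≤ y → y ≤ t → u2 y - u2 x = ∫ s in x..y, u1 s := by
    intro x y hx hxy hyt
    have h1 := integral_add_adjacent_intervals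
      (hIu1 (⟨le_rfl, ht'⟩ : (0:ℝ) ∈ Icc (0:ℝ) t) ⟨hx, hxy.trans hyt⟩)
      (hIu1 ⟨hx, hxy.trans hyt⟩ ⟨hx.trans hxy, hyt⟩)
    simp only [hu2def]
    linarith
  have habs_int : ∀ {f : ℝ → ℝ} {x y : ℝ} {g : ℝ → ℝ}, x ≤ y →
      IntervalIntegrable f volume x y → IntervalIntegrable g volume x y →
      (∀ s ∈ Icc x y, |f s| ≤ g s) → |∫ s in x..y, f s| ≤ ∫ s in x..y, g s := by
    intro f x y g hxy hf hg hfg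
    have hae : ∀ᵐ s ∂(volume.restrict (Set.uIoc x y)), ‖f s‖ ≤ g s := by
      refine (ae_restrict_mem measurableSet_uIoc).mono (fun s hs => ?_)
      rw [Real.norm_eq_abs]
      refine hfg s ?_
      rw [uIoc_of_le hxy] at hs
      exact Ioc_subset_Icc_self hs
    have h2 := intervalIntegral.norm_integral_le_abs_of_norm_le hae hg
    rw [Real.norm_eq_abs] at h2
    refine h2.trans (le_of_eq (abs_of_nonneg ?_))
    exact intervalIntegral.integral_nonneg hxy
      (fun s hs => (abs_nonneg (f s)).trans (hfg s hs))
  -- elementary integral computations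
  have hcomp1 : ∀ (s x : ℝ), ∫ y in x..s, (s - y) = (s - x)^2/2 := by
    intro s x
    rw [intervalIntegral.integral_comp_sub_left (fun z : ℝ => z) s]
    rw [integral_id]
    simp [sub_self]
  have hcomp2 : ∀ (s x : ℝ), ∫ y in x..s, (s - y)^2 = (s - x)^3/3 := by
    intro s x
    rw [intervalIntegral.integral_comp_sub_left (fun z : ℝ => z^2) s]
    rw [integral_pow]
    simp [sub_self]
    ring
  -- u2 Lipschitz and continuity
  have hu2_lip : ∀ {x y : ℝ}, 0 ≤ x → x ≤ y → y ≤ t → |u2 y - u2 x| ≤ M*t * (y - x) := by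
    intro x y hx hxy hyt
    rw [hu2_sub hx hxy hyt]
    have h1 : |∫ s in x..y, u1 s| ≤ ∫ s in x..y, M*t := by
      refine habs_int hxy (hIu1 ⟨hx, hxy.trans hyt⟩ ⟨hx.trans hxy, hyt⟩)
        intervalIntegrable_const (fun s hs => ?_)
      have hs' : s ∈ Icc (0:ℝ) t := ⟨hx.trans hs.1, hs.2.trans hyt⟩
      refine (hu1_bd s hs').trans ?_
      nlinarith [hs'.2]
    refine h1.trans ?_
    rw [intervalIntegral.integral_const, smul_eq_mul]
    nlinarith
  have hu2_lip2 : ∀ {x y : ℝ}, x ∈ Icc (0:ℝ) t → y ∈ Icc (0:ℝ) t →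
      |u2 x - u2 y| ≤ M*t * |x - y| := by
    intro x y hx hy
    rcases le_total x y with h | h
    · rw [abs_sub_comm (u2 x), abs_sub_comm x, abs_of_nonneg (sub_nonneg.2 h)]
      exact hu2_lip hx.1 h hy.2
    · rw [abs_of_nonneg (sub_nonneg.2 h)]
      exact hu2_lip hy.1 h hx.2
  have hu2_cont : ContinuousOn u2 (Icc (0:ℝ) t) := lip_cont u2 (M*t) (by positivity) hu2_lip2
  have hIu2 : ∀ {x y : ℝ}, x ∈ Icc (0:ℝ) t → y ∈ Icc (0:ℝ) t →
      IntervalIntegrable u2 volume x y := by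
    intro x y hx hy
    exact (hu2_cont.mono (uIcc_subset_Icc hx hy)).intervalIntegrable
  have hu3_sub : ∀ {x y : ℝ}, 0 ≤ x → x ≤ y → y ≤ t → u3 y - u3 x = ∫ s in x..y, u2 s := by
    intro x y hx hxy hyt
    have h1 := integral_add_adjacent_intervals
      (hIu2 (⟨le_rfl, ht'⟩ : (0:ℝ) ∈ Icc (0:ℝ) t) ⟨hx, hxy.trans hyt⟩)
      (hIu2 ⟨hx, hxy.trans hyt⟩ ⟨hx.trans hxy, hyt⟩)
    simp only [hu3def]
    linarith
  have hu20 : u2 0 = 0 := by simp [hu2def]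
  have hu2_bd : ∀ s ∈ Icc (0:ℝ) t, |u2 s| ≤ M*t * s := by
    intro s hs
    have := hu2_lip le_rfl hs.1 hs.2
    simpa [hu20] using this
  have hu3_lip2 : ∀ {x y : ℝ}, x ∈ Icc (0:ℝ) t → y ∈ Icc (0:ℝ) t →
      |u3 x - u3 y| ≤ M*t*t * |x - y| := by
    have hu3_lip : ∀ {x y : ℝ}, 0 ≤ x → x ≤ y → y ≤ t → |u3 y - u3 x| ≤ M*t*t * (y - x) := by
      intro x y hx hxy hyt
      rw [hu3_sub hx hxy hyt]
      have h1 : |∫ s in x..y, u2 s| ≤ ∫ s in x..y, M*t*t := by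
        refine habs_int hxy (hIu2 ⟨hx, hxy.trans hyt⟩ ⟨hx.trans hxy, hyt⟩)
          intervalIntegrable_const (fun s hs => ?_)
        have hs' : s ∈ Icc (0:ℝ) t := ⟨hx.trans hs.1, hs.2.trans hyt⟩
        refine (hu2_bd s hs').trans ?_
        nlinarith [hs'.2, mul_nonneg hM.le ht']
      refine h1.trans ?_
      rw [intervalIntegral.integral_const, smul_eq_mul]
      nlinarith
    intro x y hx hy
    rcases le_total x y with h | h
    · rw [abs_sub_comm (u3 x), abs_sub_comm x, abs_of_nonneg (sub_nonneg.2 h)]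
      exact hu3_lip hx.1 h hy.2
    · rw [abs_of_nonneg (sub_nonneg.2 h)]
      exact hu3_lip hy.1 h hx.2
  have hu3_cont : ContinuousOn u3 (Icc (0:ℝ) t) := lip_cont u3 (M*t*t) (by positivity) hu3_lip2
  -- first order Taylor bound for u2
  have h_in1 : ∀ s ∈ Ioc (0:ℝ) t, ∀ x ∈ Icc (0:ℝ) s,
      |u2 x - u2 s + u1 s*(s-x)| ≤ M*(s-x)^2/2 := by
    intro s hs x hx
    have hsIcc : s ∈ Icc (0:ℝ) t := ⟨hs.1.le, hs.2⟩
    have hxIcc : x ∈ Icc (0:ℝ) t := ⟨hx.1, hx.2.trans hs.2⟩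
    have e1 : u2 s - u2 x = ∫ y in x..s, u1 y := hu2_sub hx.1 hx.2 hs.2
    have e2 : ∫ y in x..s, (u1 y - u1 s) = (u2 s - u2 x) - (s - x) * u1 s := by
      rw [intervalIntegral.integral_sub (hIu1 hxIcc hsIcc) intervalIntegrable_const,
        intervalIntegral.integral_const, smul_eq_mul, ← e1]
    have e3 : u2 x - u2 s + u1 s*(s-x) = -(∫ y in x..s, (u1 y - u1 s)) := by
      rw [e2]; ring
    rw [e3, abs_neg]
    have h4 : |∫ y in x..s, (u1 y - u1 s)| ≤ ∫ y in x..s, M*(s-y) := by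
      refine habs_int hx.2 ((hIu1 hxIcc hsIcc).sub intervalIntegrable_const)
        (by exact Continuous.intervalIntegrable (by fun_prop) _ _) (fun y hy => ?_)
      have hyIcc : y ∈ Icc (0:ℝ) t := ⟨hx.1.trans hy.1, hy.2.trans hs.2⟩
      have := hu1_lip2 hyIcc hsIcc
      rw [abs_sub_comm y s, abs_of_nonneg (sub_nonneg.2 hy.2)] at this
      exact this
    refine h4.trans (le_of_eq ?_)
    rw [intervalIntegral.integral_const_mul, hcomp1]
    ring
  -- second order Taylor bound for u3
  have h_tay : ∀ s ∈ Ioc (0:ℝ) t, ∀ h ∈ Icc (0:ℝ) s,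
      |u3 (s-h) - u3 s + u2 s*h - u1 s*h^2/2| ≤ M*h^3/6 := by
    intro s hs h hh
    have hsIcc : s ∈ Icc (0:ℝ) t := ⟨hs.1.le, hs.2⟩
    have hshIcc : s - h ∈ Icc (0:ℝ) t := ⟨by linarith [hh.1, hh.2], by linarith [hh.1, hs.2]⟩
    have hd : s - (s - h) = h := by ring
    have e1 : u3 s - u3 (s-h) = ∫ x in (s-h)..s, u2 x :=
      hu3_sub hshIcc.1 (by linarith [hh.1]) hs.2
    have e2 : ∫ x in (s-h)..s, (u2 x - u2 s + u1 s*(s-x))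
        = (u3 s - u3 (s-h)) - h * u2 s + u1 s*(h^2/2) := by
      rw [intervalIntegral.integral_add
        ((hIu2 hshIcc hsIcc).sub intervalIntegrable_const)
        (by exact Continuous.intervalIntegrable (by fun_prop) _ _),
        intervalIntegral.integral_sub (hIu2 hshIcc hsIcc) intervalIntegrable_const,
        intervalIntegral.integral_const, smul_eq_mul,
        intervalIntegral.integral_const_mul, hcomp1, ← e1, hd]
    have e3 : u3 (s-h) - u3 s + u2 s*h - u1 s*h^2/2
        = -(∫ x in (s-h)..s, (u2 x - u2 s + u1 s*(s-x))) := by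
      rw [e2]; ring
    rw [e3, abs_neg]
    have h4 : |∫ x in (s-h)..s, (u2 x - u2 s + u1 s*(s-x))|
        ≤ ∫ x in (s-h)..s, (M/2)*(s-x)^2 := by
      refine habs_int (by linarith [hh.1]) ?_ (by exact Continuous.intervalIntegrable (by fun_prop) _ _)
        (fun x hx => ?_)
      · exact ((hIu2 hshIcc hsIcc).sub intervalIntegrable_const).add
          (by exact Continuous.intervalIntegrable (by fun_prop) _ _)
      · have := h_in1 s hs x ⟨hshIcc.1.trans hx.1, hx.2⟩
        refine this.trans (le_of_eq (by ring))
    refine h4.trans (le_of_eq ?_)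
    rw [intervalIntegral.integral_const_mul, hcomp2, hd]
    ring
  clear_value u1 u2 u3
  -- the key pointwise estimate
  have hkey : ∀ s ∈ Ioc (0:ℝ) t, u1 s ≠ 0 →
      (u1 s)^6 * (|u1 s|/(20*M)) ≤
        1000000000*M^4 * ∫ r in (s - |u1 s|/(20*M))..s, (u3 r)^2 := by
    intro s hs hz
    set l := |u1 s|/(20*M) with hldef
    have hl_pos : 0 < l := div_pos (abs_pos.2 hz) (by positivity)
    have habs : |u1 s| = 20*M*l := by rw [hldef]; field_simp
    have hls : l ≤ s := by
      have h1 := hu1_bd s ⟨hs.1.le, hs.2⟩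
      rw [hldef, div_le_iff₀ (by positivity : (0:ℝ) < 20*M)]
      nlinarith [hs.1, h1]
    clear_value l
    have hM0 : M ≠ 0 := hM.ne'
    have hl0 : l ≠ 0 := hl_pos.ne'
    have hsIcc : s ∈ Icc (0:ℝ) t := ⟨hs.1.le, hs.2⟩
    have hslIcc : s - l ∈ Icc (0:ℝ) t := ⟨by linarith, by linarith [hs.2]⟩
    set qf : ℝ → ℝ := fun h => 30 - 180*(h/l) + 180*(h/l)^2 with hqf
    have hq30 : ∀ h ∈ Icc (0:ℝ) l, |qf h| ≤ 30 := by
      intro h hh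
      have hx0 : 0 ≤ h/l := div_nonneg hh.1 hl_pos.le
      have hx1 : h/l ≤ 1 := (div_le_one hl_pos).2 hh.2
      rw [hqf, abs_le]
      constructor
      · nlinarith [sq_nonneg (h/l - 1/2)]
      · nlinarith [mul_nonneg hx0 (sub_nonneg.2 hx1)]
    have hqcont : Continuous qf := by rw [hqf]; fun_prop
    have hcontw : ContinuousOn (fun h => u3 (s-h)) (Icc (0:ℝ) l) := by
      have hmaps : MapsTo (fun h => s - h) (Icc (0:ℝ) l) (Icc (0:ℝ) t) := by
        intro h hh
        refine ⟨?_, ?_⟩ <;> dsimp only <;> [linarith [hh.2, hls]; linarith [hh.1, hs.2]]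
      exact hu3_cont.comp ((continuous_const.sub continuous_id').continuousOn) hmaps
    have hIw : IntervalIntegrable (fun h => u3 (s-h) * qf h) volume 0 l := by
      apply ContinuousOn.intervalIntegrable
      rw [uIcc_of_le hl_pos.le]
      exact hcontw.mul hqcont.continuousOn
    have hIpoly : IntervalIntegrable
        (fun h => (u3 s - u2 s*h + u1 s*h^2/2) * qf h) volume 0 l := by
      exact Continuous.intervalIntegrable (by fun_prop) _ _
    have hDeq : (fun h => (u3 (s-h) - u3 s + u2 s*h - u1 s*h^2/2) * qf h)
        = fun h => u3 (s-h)*qf h - (u3 s - u2 s*h + u1 s*h^2/2)*qf h := by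
      funext h; ring
    have hID : IntervalIntegrable
        (fun h => (u3 (s-h) - u3 s + u2 s*h - u1 s*h^2/2) * qf h) volume 0 l := by
      rw [hDeq]; exact hIw.sub hIpoly
    have hsplit : ∫ h in (0:ℝ)..l, u3 (s-h) * qf h
        = u1 s*l^3/2 + ∫ h in (0:ℝ)..l, (u3 (s-h) - u3 s + u2 s*h - u1 s*h^2/2) * qf h := by
      have e : EqOn (fun h => u3 (s-h) * qf h)
          (fun h => (u3 s - u2 s*h + u1 s*h^2/2)*qf h
            + (u3 (s-h) - u3 s + u2 s*h - u1 s*h^2/2)*qf h) (uIcc (0:ℝ) l) := by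
        intro h _; ring
      rw [intervalIntegral.integral_congr e, intervalIntegral.integral_add hIpoly hID]
      congr 1
      simp only [hqf]
      exact poly_moment l (u3 s) (u2 s) (u1 s) hl_pos.ne'
    have hDq_bd : |∫ h in (0:ℝ)..l, (u3 (s-h) - u3 s + u2 s*h - u1 s*h^2/2) * qf h|
        ≤ 5*M*l^4/4 := by
      have h1 : |∫ h in (0:ℝ)..l, (u3 (s-h) - u3 s + u2 s*h - u1 s*h^2/2) * qf h|
          ≤ ∫ h in (0:ℝ)..l, 5*M*h^3 := by
        refine habs_int hl_pos.le hID
          (by exact Continuous.intervalIntegrable (by fun_prop) _ _) (fun h hh => ?_)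
        have hD := h_tay s hs h ⟨hh.1, hh.2.trans hls⟩
        have hq := hq30 h hh
        rw [abs_mul]
        calc |u3 (s-h) - u3 s + u2 s*h - u1 s*h^2/2| * |qf h| ≤ (M*h^3/6) * 30 := by
              exact mul_le_mul hD hq (abs_nonneg _)
                (div_nonneg (mul_nonneg hM.le (pow_nonneg hh.1 3)) (by norm_num))
        _ = 5*M*h^3 := by ring
      refine h1.trans (le_of_eq ?_)
      rw [show (fun h : ℝ => 5*M*h^3) = fun h : ℝ => (5*M)*h^3 from rfl,
        intervalIntegral.integral_const_mul, integral_pow]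
      norm_num
      ring
    have hGnn : (0:ℝ) ≤ ∫ r in (s-l)..s, (u3 r)^2 :=
      intervalIntegral.integral_nonneg (by linarith) (fun r _ => sq_nonneg _)
    set G := ∫ r in (s-l)..s, (u3 r)^2 with hGdef
    have hGcomp : ∫ h in (0:ℝ)..l, (u3 (s-h))^2 = G := by
      rw [hGdef]
      have := intervalIntegral.integral_comp_sub_left (a := (0:ℝ)) (b := l)
        (fun r => (u3 r)^2) s
      simpa using this
    obtain ⟨lam, hlam_pos, hlam⟩ : ∃ lam : ℝ, 0 < lam ∧ lam = M*l^3/180 :=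
      ⟨_, by positivity, rfl⟩
    have hYoung : |∫ h in (0:ℝ)..l, u3 (s-h) * qf h|
        ≤ G/(2*lam) + 450*lam*l := by
      have h1 : |∫ h in (0:ℝ)..l, u3 (s-h) * qf h|
          ≤ ∫ h in (0:ℝ)..l, ((u3 (s-h))^2/(2*lam) + 450*lam) := by
        refine habs_int hl_pos.le hIw ?_ (fun h hh => ?_)
        · apply ContinuousOn.intervalIntegrable
          rw [uIcc_of_le hl_pos.le]
          exact (((hcontw.pow 2).div_const _).add continuousOn_const)
        · have hq := hq30 h hh
          have h2 : |u3 (s-h) * qf h| ≤ |u3 (s-h)| * 30 := by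
            rw [abs_mul]
            exact mul_le_mul_of_nonneg_left hq (abs_nonneg _)
          refine h2.trans ?_
          have e : (u3 (s-h))^2/(2*lam) + 450*lam
              = ((u3 (s-h))^2 + 900*lam^2)/(2*lam) := by
            field_simp; ring
          rw [e, le_div_iff₀ (by positivity : (0:ℝ) < 2*lam)]
          nlinarith [sq_nonneg (|u3 (s-h)| - 30*lam), sq_abs (u3 (s-h)),
            abs_nonneg (u3 (s-h)), hlam_pos]
      refine h1.trans (le_of_eq ?_)
      rw [intervalIntegral.integral_add]
      · rw [intervalIntegral.integral_div, hGcomp, intervalIntegral.integral_const,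
          smul_eq_mul]
        ring
      · apply ContinuousOn.intervalIntegrable
        rw [uIcc_of_le hl_pos.le]
        exact ((hcontw.pow 2).div_const _)
      · exact intervalIntegrable_const
    have hmain : |u1 s| * l^3/2 ≤ G/(2*lam) + 450*lam*l + 5*M*l^4/4 := by
      have e2 : |u1 s| * l^3/2 = |u1 s * l^3/2| := by
        rw [abs_div, abs_mul, abs_of_nonneg (by positivity : (0:ℝ) ≤ l^3),
          abs_of_nonneg (by norm_num : (0:ℝ) ≤ (2:ℝ))]
      have e : u1 s*l^3/2 = (∫ h in (0:ℝ)..l, u3 (s-h)*qf h)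
          - ∫ h in (0:ℝ)..l, (u3 (s-h) - u3 s + u2 s*h - u1 s*h^2/2) * qf h := by
        rw [hsplit]; ring
      rw [e2, e, sub_eq_add_neg]
      refine (abs_add_le _ _).trans ?_
      rw [abs_neg]
      exact add_le_add hYoung hDq_bd
    rw [habs] at hmain
    have e3 : G/(2*lam) = 90*G/(M*l^3) := by rw [hlam]; field_simp; ring
    have e4 : 450*lam*l = 5*M*l^4/2 := by rw [hlam]; ring
    rw [e3, e4] at hmain
    have e5 : 20*M*l*l^3/2 - 5*M*l^4/2 - 5*M*l^4/4 = (25/4)*(M*l^4) := by ring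
    have h7 : (25/4)*(M*l^4) ≤ 90*G/(M*l^3) := by linarith [hmain, e5]
    rw [le_div_iff₀ (by positivity : (0:ℝ) < M*l^3)] at h7
    have e6 : (25/4)*(M*l^4)*(M*l^3) = (25/4)*(M^2*l^7) := by ring
    have h8 : M^2*l^7 ≤ 15*G := by linarith [h7, e6]
    have h9 : (u1 s)^6 = (20*M*l)^6 := by
      rw [← habs]
      exact ((pow_abs (u1 s) 6).trans (abs_of_nonneg (by positivity))).symm
    rw [h9]
    have h10 := mul_le_mul_of_nonneg_left h8 (show (0:ℝ) ≤ M^4 by positivity)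
    have e7 : (20*M*l)^6 * l = 64000000*(M^4*(M^2*l^7)) := by ring
    have e8 : M^4*(15*G) = 15*(M^4*G) := by ring
    have hMG : (0:ℝ) ≤ M^4*G := mul_nonneg (by positivity) hGnn
    rw [e7]
    calc 64000000*(M^4*(M^2*l^7)) ≤ 64000000*(M^4*(15*G)) := by linarith [h10]
    _ = 960000000*(M^4*G) := by rw [e8]; ring
    _ ≤ 1000000000*(M^4*G) := by linarith [hMG]
    _ = 1000000000*M^4*G := by ring

  -- clamped versions, globally defined
  set c : ℝ → ℝ := fun x => max 0 (min x t) with hcdef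
  have hc_mem : ∀ x, c x ∈ Icc (0:ℝ) t := fun x =>
    ⟨le_max_left _ _, max_le ht' (min_le_right x t)⟩
  have hc_eq : ∀ x ∈ Ioc (0:ℝ) t, c x = x := by
    intro x hx
    rw [hcdef]; dsimp only
    rw [min_eq_left hx.2, max_eq_right hx.1.le]
  have hc_lip : ∀ x y, |c x - c y| ≤ |x - y| := by
    intro x y
    rw [hcdef]; dsimp only
    have h1 : |max 0 (min x t) - max 0 (min y t)| ≤ |min x t - min y t| := by
      rw [max_comm 0 (min x t), max_comm 0 (min y t)]
      exact abs_max_sub_max_le_abs _ _ _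
    refine h1.trans ?_
    have h2 := abs_min_sub_min_le_max x t y t
    simpa using h2
  have hccont : Continuous c := by
    rw [hcdef]; fun_prop
  set v1 : ℝ → ℝ := fun x => u1 (c x) with hv1def
  set v3 : ℝ → ℝ := fun x => u3 (c x) with hv3def
  have hv1cont : Continuous v1 := by
    rw [hv1def]
    exact ContinuousOn.comp_continuous hu1_cont hccont hc_mem
  have hv3cont : Continuous v3 := by
    rw [hv3def]
    exact ContinuousOn.comp_continuous hu3_cont hccont hc_mem
  set L : ℝ → ℝ := fun x => |v1 x| / (20*M) with hLdef
  have hLcont : Continuous L := by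
    rw [hLdef]
    exact (hv1cont.abs).div_const _
  have hL_nonneg : ∀ x, 0 ≤ L x := by
    intro x; rw [hLdef]; dsimp only; positivity
  have hL_lip : ∀ x y, |L x - L y| ≤ |x - y| / 20 := by
    intro x y
    have h1 : |(|v1 x| - |v1 y|)| ≤ M * |x - y| := by
      refine (abs_abs_sub_abs_le_abs_sub _ _).trans ?_
      rw [hv1def]; dsimp only
      exact (hu1_lip2 (hc_mem x) (hc_mem y)).trans
        (mul_le_mul_of_nonneg_left (hc_lip x y) hM.le)
    rw [hLdef]; dsimp only
    rw [div_sub_div_same, abs_div, abs_of_nonneg (by positivity : (0:ℝ) ≤ 20*M)]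
    rw [div_le_div_iff₀ (by positivity) (by norm_num : (0:ℝ) < 20)]
    nlinarith [h1, abs_nonneg (x - y)]
  have hv1_eq : ∀ s ∈ Ioc (0:ℝ) t, v1 s = u1 s := by
    intro s hs; rw [hv1def]; dsimp only; rw [hc_eq s hs]
  have hv3_eq : ∀ s ∈ Ioc (0:ℝ) t, v3 s = u3 s := by
    intro s hs; rw [hv3def]; dsimp only; rw [hc_eq s hs]
  have hL_eq : ∀ s ∈ Ioc (0:ℝ) t, L s = |u1 s| / (20*M) := by
    intro s hs; rw [hLdef]; dsimp only; rw [hv1_eq s hs]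
  set S : Set (ℝ×ℝ) := {p | p.1 - L p.1 < p.2 ∧ p.2 ≤ p.1} with hSdef
  have hSmeas : MeasurableSet S := by
    have e : S = {p : ℝ×ℝ | p.1 - L p.1 < p.2} ∩ {p : ℝ×ℝ | p.2 ≤ p.1} := rfl
    rw [e]
    refine MeasurableSet.inter ?_ ?_
    · exact measurableSet_lt ((continuous_fst.sub (hLcont.comp continuous_fst)).measurable)
        continuous_snd.measurable
    · exact measurableSet_le continuous_snd.measurable continuous_fst.measurable
  set θ : ℝ×ℝ → ℝ := fun p => (L p.1)⁻¹ * S.indicator (fun _ => (1:ℝ)) p * (v3 p.2)^2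
    with hθdef
  have hθmeas : Measurable θ := by
    rw [hθdef]
    exact ((((hLcont.comp continuous_fst).measurable).inv.mul
      (measurable_const.indicator hSmeas)).mul
      (((hv3cont.comp continuous_snd).measurable).pow_const 2))
  have hθnn : ∀ p, 0 ≤ θ p := by
    intro p
    rw [hθdef]; dsimp only
    exact mul_nonneg (mul_nonneg (inv_nonneg.2 (hL_nonneg _))
      (Set.indicator_nonneg (fun _ _ => zero_le_one) p)) (sq_nonneg _)
  set μ : Measure ℝ := volume.restrict (Ioc 0 t) with hμdef
  obtain ⟨K, hK⟩ := IsCompact.exists_bound_of_continuousOn isCompact_Icc hu3_cont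
  -- pointwise bound, real form
  have hpt : ∀ s ∈ Ioc (0:ℝ) t,
      (u1 s)^6 ≤ (1000000000:ℝ)*M^4 * ∫ r, θ (s, r) ∂μ := by
    intro s hs
    by_cases hz : u1 s = 0
    · rw [hz]
      rw [show ((0:ℝ))^6 = 0 by norm_num]
      exact mul_nonneg (by positivity) (integral_nonneg (fun r => hθnn _))
    · have hl_pos : 0 < |u1 s| / (20*M) := div_pos (abs_pos.2 hz) (by positivity)
      have hls : |u1 s| / (20*M) ≤ s := by
        have h1 := hu1_bd s ⟨hs.1.le, hs.2⟩
        rw [div_le_iff₀ (by positivity : (0:ℝ) < 20*M)]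
        nlinarith [hs.1, h1]
      have hLs : L s = |u1 s| / (20*M) := hL_eq s hs
      have hwin : Ioc (s - |u1 s| / (20*M)) s ⊆ Ioc (0:ℝ) t := by
        intro r hr
        exact ⟨lt_of_le_of_lt (by linarith) hr.1, hr.2.trans hs.2⟩
      have hθs : (fun r => θ (s, r))
          = (Ioc (s - |u1 s| / (20*M)) s).indicator
            (fun r => (|u1 s| / (20*M))⁻¹ * (u3 r)^2) := by
        funext r
        by_cases hr : r ∈ Ioc (s - |u1 s| / (20*M)) s
        · have hrS : (s,r) ∈ S := by
            simp only [hSdef, mem_setOf_eq]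
            exact ⟨by rw [hLs]; exact hr.1, hr.2⟩
          rw [hθdef]; dsimp only
          rw [Set.indicator_of_mem hrS, Set.indicator_of_mem hr, hLs,
            hv3_eq r (hwin hr)]
          ring
        · have hrS : (s,r) ∉ S := by
            simp only [hSdef, mem_setOf_eq]
            intro hcon
            exact hr ⟨by rw [← hLs]; exact hcon.1, hcon.2⟩
          rw [hθdef]; dsimp only
          rw [Set.indicator_of_notMem hrS, Set.indicator_of_notMem hr]
          ring
      have hIioc : ∫ r, θ (s,r) ∂μ
          = (|u1 s| / (20*M))⁻¹ * ∫ r in Ioc (s - |u1 s| / (20*M)) s, (u3 r)^2 := by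
        rw [hθs, MeasureTheory.integral_indicator measurableSet_Ioc, hμdef,
          Measure.restrict_restrict measurableSet_Ioc,
          inter_eq_self_of_subset_left hwin]
        exact integral_const_mul _ _
      have hk := hkey s hs hz
      rw [intervalIntegral.integral_of_le (by linarith : s - |u1 s| / (20*M) ≤ s)] at hk
      rw [hIioc]
      have hInn : 0 ≤ ∫ r in Ioc (s - |u1 s| / (20*M)) s, (u3 r)^2 :=
        integral_nonneg (fun r => sq_nonneg _)
      rw [show (1000000000:ℝ)*M^4 * ((|u1 s| / (20*M))⁻¹ *
          ∫ r in Ioc (s - |u1 s| / (20*M)) s, (u3 r)^2)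
        = ((1000000000:ℝ)*M^4 * ∫ r in Ioc (s - |u1 s| / (20*M)) s, (u3 r)^2)
          * (|u1 s| / (20*M))⁻¹ from by ring]
      rw [show (u1 s)^6 = ((u1 s)^6 * (|u1 s| / (20*M))) * (|u1 s| / (20*M))⁻¹ from by
        field_simp]
      exact mul_le_mul_of_nonneg_right hk (inv_nonneg.2 hl_pos.le)
  -- integrability of θ slices
  have hθint : ∀ s : ℝ, Integrable (fun r => θ (s, r)) μ := by
    intro s
    refine Integrable.mono' (integrable_const ((L s)⁻¹ * K^2))
      ((hθmeas.comp measurable_prodMk_left).aestronglyMeasurable) ?_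
    refine (ae_restrict_mem measurableSet_Ioc).mono (fun r hr => ?_)
    rw [Real.norm_eq_abs, abs_of_nonneg (hθnn _)]
    have hv3r : |v3 r| ≤ K := by
      rw [hv3_eq r hr]
      simpa [Real.norm_eq_abs] using hK r ⟨hr.1.le, hr.2⟩
    have hsq : (v3 r)^2 ≤ K^2 := by nlinarith [sq_abs (v3 r), abs_nonneg (v3 r)]
    have hind : S.indicator (fun _ => (1:ℝ)) (s,r) ≤ 1 := by
      by_cases hmem : (s,r) ∈ S
      · rw [Set.indicator_of_mem hmem]
      · rw [Set.indicator_of_notMem hmem]; norm_num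
    have hindnn : 0 ≤ S.indicator (fun _ => (1:ℝ)) (s,r) :=
      Set.indicator_nonneg (fun _ _ => zero_le_one) _
    rw [hθdef]; dsimp only
    calc (L s)⁻¹ * S.indicator (fun _ => (1:ℝ)) (s,r) * (v3 r)^2
        ≤ (L s)⁻¹ * 1 * (v3 r)^2 := by
          exact mul_le_mul_of_nonneg_right
            (mul_le_mul_of_nonneg_left hind (inv_nonneg.2 (hL_nonneg s))) (sq_nonneg _)
    _ ≤ (L s)⁻¹ * 1 * K^2 := by
          exact mul_le_mul_of_nonneg_left hsq
            (by positivity)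
    _ = (L s)⁻¹ * K^2 := by ring
  -- overlap bound
  have hover : ∀ r ∈ Ioc (0:ℝ) t,
      (∫⁻ s, ENNReal.ofReal (θ (s, r)) ∂μ) ≤ ENNReal.ofReal ((10/9) * (u3 r)^2) := by
    intro r hr
    by_cases hlr : L r = 0
    · have hz : ∀ s, θ (s, r) = 0 := by
        intro s
        by_cases hmem : (s,r) ∈ S
        · exfalso
          simp only [hSdef, mem_setOf_eq] at hmem
          obtain ⟨h1, h2⟩ := hmem
          have h34 := hL_lip s r
          rw [abs_of_nonneg (by linarith : (0:ℝ) ≤ s - r)] at h34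
          have h3 : L s - L r ≤ (s - r)/20 := (le_abs_self _).trans h34
          linarith [hlr ▸ h3]
        · rw [hθdef]; dsimp only
          rw [Set.indicator_of_notMem hmem]; ring
      simp only [hz, ENNReal.ofReal_zero, lintegral_zero]
      exact zero_le
    · have hlr_pos : 0 < L r := (hL_nonneg r).lt_of_ne (Ne.symm hlr)
      have hptw : ∀ s, ENNReal.ofReal (θ (s, r)) ≤
          (Icc r (r + (20/19)*L r)).indicator
            (fun _ => ENNReal.ofReal ((19/18)*(L r)⁻¹*(u3 r)^2)) s := by
        intro s
        by_cases hmem : (s,r) ∈ S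
        · have hmem' := hmem
          simp only [hSdef, mem_setOf_eq] at hmem'
          obtain ⟨h1, h2⟩ := hmem'
          have h34 := hL_lip s r
          rw [abs_of_nonneg (by linarith : (0:ℝ) ≤ s - r)] at h34
          have h3 : L s - L r ≤ (s - r)/20 := (le_abs_self _).trans h34
          have h4 : L r - L s ≤ (s - r)/20 := by
            refine (le_abs_self _).trans ?_
            rw [abs_sub_comm]
            exact h34
          have h5 : s - r < L s := by linarith
          have h6 : s - r ≤ (20/19)*L r := by linarith
          have h7 : (18/19)*L r ≤ L s := by linarith
          have h8 : 0 < L s := by nlinarith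
          have hsmem : s ∈ Icc r (r + (20/19)*L r) := ⟨by linarith, by linarith⟩
          rw [Set.indicator_of_mem hsmem]
          apply ENNReal.ofReal_le_ofReal
          rw [hθdef]; dsimp only
          rw [Set.indicator_of_mem hmem, hv3_eq r hr]
          have h9 : (L s)⁻¹ ≤ (19/18)*(L r)⁻¹ := by
            rw [show (19/18)*(L r)⁻¹ = ((18/19)*L r)⁻¹ by
              rw [mul_inv]; field_simp]
            exact inv_anti₀ (by nlinarith) h7
          calc (L s)⁻¹ * 1 * (u3 r)^2 ≤ ((19/18)*(L r)⁻¹) * 1 * (u3 r)^2 :=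
                mul_le_mul_of_nonneg_right (by
                  rw [mul_one, mul_one]; exact h9) (sq_nonneg _)
          _ = (19/18)*(L r)⁻¹*(u3 r)^2 := by ring
        · rw [hθdef]; dsimp only
          rw [Set.indicator_of_notMem hmem]
          rw [show (L s)⁻¹ * 0 * (v3 r)^2 = 0 from by ring]
          simp only [ENNReal.ofReal_zero]
          exact zero_le
      calc (∫⁻ s, ENNReal.ofReal (θ (s, r)) ∂μ)
          ≤ ∫⁻ s, (Icc r (r + (20/19)*L r)).indicator
              (fun _ => ENNReal.ofReal ((19/18)*(L r)⁻¹*(u3 r)^2)) s ∂μ :=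
            lintegral_mono hptw
      _ ≤ ∫⁻ s, (Icc r (r + (20/19)*L r)).indicator
              (fun _ => ENNReal.ofReal ((19/18)*(L r)⁻¹*(u3 r)^2)) s := by
            rw [hμdef]
            exact lintegral_mono' Measure.restrict_le_self le_rfl
      _ = ENNReal.ofReal ((19/18)*(L r)⁻¹*(u3 r)^2)
            * volume (Icc r (r + (20/19)*L r)) :=
            lintegral_indicator_const measurableSet_Icc _
      _ ≤ ENNReal.ofReal ((10/9) * (u3 r)^2) := by
            rw [Real.volume_Icc, show r + (20/19)*L r - r = (20/19)*L r from by ring,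
              ← ENNReal.ofReal_mul (by positivity)]
            apply ENNReal.ofReal_le_ofReal
            rw [show (19/18)*(L r)⁻¹*(u3 r)^2*((20/19)*L r)
              = (10/9)*(u3 r)^2*((L r)⁻¹*(L r)) from by ring,
              inv_mul_cancel₀ hlr, mul_one]
  -- assembly
  have hAEu1 : AEStronglyMeasurable (fun s => (u1 s)^6) μ := by
    rw [hμdef]
    exact ((hu1_cont.mono Ioc_subset_Icc_self).pow 6).aestronglyMeasurable measurableSet_Ioc
  have hAeq : (∫ s in (0:ℝ)..t, (u1 s)^6)
      = (∫⁻ s, ENNReal.ofReal ((u1 s)^6) ∂μ).toReal := by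
    rw [intervalIntegral.integral_of_le ht', hμdef]
    exact integral_eq_lintegral_of_nonneg_ae
      (Filter.Eventually.of_forall (fun s => by positivity)) (by rw [← hμdef]; exact hAEu1)
  have hBint : Integrable (fun r => (u3 r)^2) μ := by
    rw [hμdef]
    exact ((hu3_cont.pow 2).integrableOn_Icc).mono_set Ioc_subset_Icc_self
  have hchain : (∫⁻ s, ENNReal.ofReal ((u1 s)^6) ∂μ)
      ≤ ENNReal.ofReal ((1000000000:ℝ)*M^4)
        * ENNReal.ofReal (∫ r, (10/9) * (u3 r)^2 ∂μ) := by
    calc (∫⁻ s, ENNReal.ofReal ((u1 s)^6) ∂μ)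
        ≤ ∫⁻ s, ENNReal.ofReal ((1000000000:ℝ)*M^4)
            * ∫⁻ r, ENNReal.ofReal (θ (s,r)) ∂μ ∂μ := by
          refine lintegral_mono_ae ?_
          rw [hμdef]
          refine (ae_restrict_mem measurableSet_Ioc).mono (fun s hs => ?_)
          calc ENNReal.ofReal ((u1 s)^6)
              ≤ ENNReal.ofReal ((1000000000:ℝ)*M^4 * ∫ r, θ (s,r) ∂μ) :=
                ENNReal.ofReal_le_ofReal (hpt s hs)
          _ = ENNReal.ofReal ((1000000000:ℝ)*M^4)
                * ENNReal.ofReal (∫ r, θ (s,r) ∂μ) :=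
                ENNReal.ofReal_mul (by positivity)
          _ = ENNReal.ofReal ((1000000000:ℝ)*M^4)
                * ∫⁻ r, ENNReal.ofReal (θ (s,r)) ∂μ := by
                rw [ofReal_integral_eq_lintegral_ofReal (hθint s)
                  (Filter.Eventually.of_forall (fun r => hθnn _))]
    _ = ENNReal.ofReal ((1000000000:ℝ)*M^4)
          * ∫⁻ s, ∫⁻ r, ENNReal.ofReal (θ (s,r)) ∂μ ∂μ :=
          lintegral_const_mul' _ _ ENNReal.ofReal_ne_top
    _ = ENNReal.ofReal ((1000000000:ℝ)*M^4)
          * ∫⁻ r, ∫⁻ s, ENNReal.ofReal (θ (s,r)) ∂μ ∂μ := by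
          rw [lintegral_lintegral_swap]
          exact (ENNReal.measurable_ofReal.comp hθmeas).aemeasurable
    _ ≤ ENNReal.ofReal ((1000000000:ℝ)*M^4)
          * ∫⁻ r, ENNReal.ofReal ((10/9) * (u3 r)^2) ∂μ := by
          refine mul_le_mul_right ?_ _
          refine lintegral_mono_ae ?_
          rw [hμdef]
          refine (ae_restrict_mem measurableSet_Ioc).mono (fun r hr => ?_)
          exact hover r hr
    _ = ENNReal.ofReal ((1000000000:ℝ)*M^4)
          * ENNReal.ofReal (∫ r, (10/9) * (u3 r)^2 ∂μ) := by
          rw [ofReal_integral_eq_lintegral_ofReal (hBint.const_mul _)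
            (Filter.Eventually.of_forall (fun r => by positivity))]
  have hB'nn : 0 ≤ ∫ r, (u3 r)^2 ∂μ := integral_nonneg (fun r => sq_nonneg _)
  have hRHS : (∫ s in (0:ℝ)..t, (u3 s)^2) = ∫ r, (u3 r)^2 ∂μ := by
    rw [intervalIntegral.integral_of_le ht', hμdef]
  rw [hAeq, hRHS]
  have hmul : (∫ r, (10/9) * (u3 r)^2 ∂μ) = (10/9) * ∫ r, (u3 r)^2 ∂μ :=
    integral_const_mul _ _
  calc (∫⁻ s, ENNReal.ofReal ((u1 s)^6) ∂μ).toReal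
      ≤ (ENNReal.ofReal ((1000000000:ℝ)*M^4)
          * ENNReal.ofReal (∫ r, (10/9) * (u3 r)^2 ∂μ)).toReal :=
        ENNReal.toReal_mono
          (ENNReal.mul_ne_top ENNReal.ofReal_ne_top ENNReal.ofReal_ne_top) hchain
  _ = (1000000000:ℝ)*M^4 * ((10/9) * ∫ r, (u3 r)^2 ∂μ) := by
        rw [← ENNReal.ofReal_mul (by positivity), ENNReal.toReal_ofReal]
        · rw [hmul]
        · rw [hmul]
          exact mul_nonneg (by positivity) (by linarith [hB'nn])
  _ ≤ 2000000000 * M ^ 4 * ∫ r, (u3 r)^2 ∂μ := by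
        nlinarith [mul_nonneg (pow_nonneg hM.le 4) hB'nn]


theorem stmt10 :
    ∃ C : ℝ, 0 < C ∧ ∀ t : ℝ, 0 < t → ∀ u : ℝ → ℝ, ∀ M : ℝ, Measurable u →
      (∀ᵐ s ∂(volume.restrict (Set.Ioc 0 t)), |u s| ≤ M) →
      (∫ s in (0:ℝ)..t, (iterPrim u 1 s) ^ 6) ≤
        C * M ^ 4 * ∫ s in (0:ℝ)..t, (iterPrim u 3 s) ^ 2 := by
  refine ⟨2000000000, by norm_num, fun t ht u M hu hbd => ?_⟩
  have hM0 : 0 ≤ M := by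
    have hne : volume.restrict (Set.Ioc (0:ℝ) t) ≠ 0 := by
      intro h
      rw [Measure.restrict_eq_zero, Real.volume_Ioc] at h
      rw [ENNReal.ofReal_eq_zero] at h
      linarith
    haveI : (ae (volume.restrict (Set.Ioc (0:ℝ) t))).NeBot := ae_neBot.mpr hne
    obtain ⟨s, hs⟩ := hbd.exists
    exact (abs_nonneg (u s)).trans hs
  rcases eq_or_lt_of_le hM0 with hM | hM
  · -- M = 0
    have hu0 : ∀ᵐ x ∂(volume.restrict (Set.Ioc (0:ℝ) t)), u x = 0 := by
      refine hbd.mono (fun x hx => ?_)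
      have h2 : |u x| ≤ 0 := le_of_le_of_eq hx hM.symm
      exact abs_eq_zero.mp (le_antisymm h2 (abs_nonneg _))
    have hu0' : ∀ᵐ x : ℝ, x ∈ Set.Ioc (0:ℝ) t → u x = 0 := ae_imp_of_ae_restrict hu0
    have h1 : ∀ s ∈ Set.Icc (0:ℝ) t, iterPrim u 1 s = 0 := by
      intro s hs
      have e : iterPrim u 1 s = ∫ x in (0:ℝ)..s, u x := by simp [iterPrim]
      rw [e]
      refine intervalIntegral.integral_zero_ae ?_
      refine hu0'.mono (fun x hx hmem => ?_)
      refine hx ?_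
      rw [Set.uIoc_of_le hs.1] at hmem
      exact ⟨hmem.1, hmem.2.trans hs.2⟩
    have hLHS : (∫ s in (0:ℝ)..t, (iterPrim u 1 s)^6) = 0 := by
      have heq : Set.EqOn (fun s => (iterPrim u 1 s)^6) (fun _ => (0:ℝ))
          (Set.uIcc (0:ℝ) t) := by
        intro s hs
        rw [Set.uIcc_of_le ht.le] at hs
        simp [h1 s hs]
      rw [intervalIntegral.integral_congr heq]
      simp
    rw [hLHS, ← hM]
    have hnn : (0:ℝ) ≤ ∫ s in (0:ℝ)..t, (iterPrim u 3 s) ^ 2 :=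
      intervalIntegral.integral_nonneg ht.le (fun s _ => sq_nonneg _)
    norm_num
  · exact key t ht u M hM hu hbd
end

section
/- In any Lie algebra with fixed element x₀, for every ν ∈ ℕ* there exist integer coefficients α^ν_j (for 1 ≤ 2j+1 ≤ ν) such that for every element b, [b, b0^ν] = ∑_{1 ≤ 2j+1 ≤ ν} α^ν_j [b0^j, b0^{j+1}] 0^{ν−2j−1}, where c0^k denotes the k-fold right bracketing of c with x₀. Moreover the coefficients satisfy the recursion α_j^ν = α_j^{ν−1} − α_{j−1}^{ν−2}. -/
/-- `rb x₀ c k` is the `k`-fold right-bracketing of `c` with `x₀`, i.e. `c0^k`. -/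
def rb {L : Type*} [LieRing L] (x₀ : L) : L → ℕ → L
  | c, 0 => c
  | c, (k+1) => ⁅rb x₀ c k, x₀⁆

/-- Coefficients for expanding `⁅b0^m, b0^{m+g+1}⁆`. -/
def gam : ℕ → ℕ → ℕ → ℤ
  | 0, m, j => if j = m then 1 else 0
  | 1, m, j => if j = m then 1 else 0
  | (g+2), m, j => gam (g+1) m j - gam g (m+1) j

lemma gam_shift : ∀ g m j : ℕ, gam g (m+1) (j+1) = gam g m j := by
  intro g
  induction g using Nat.strong_induction_on with
  | _ g ih =>
    match g with
    | 0 => intro m j; simp [gam]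
    | 1 => intro m j; simp [gam]
    | (g+2) =>
      intro m j
      simp only [gam, ih (g+1) (by omega), ih g (by omega)]

lemma gam_support : ∀ g m j : ℕ, 2*m + g < 2*j → gam g m j = 0 := by
  intro g
  induction g using Nat.strong_induction_on with
  | _ g ih =>
    match g with
    | 0 => intro m j h; simp [gam]; omega
    | 1 => intro m j h; simp [gam]; omega
    | (g+2) =>
      intro m j h
      simp only [gam, ih (g+1) (by omega) m j (by omega),
        ih g (by omega) (m+1) j (by omega), sub_zero]

lemma rb_lie {L : Type*} [LieRing L] (x₀ c : L) (k : ℕ) :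
    ⁅rb x₀ c k, x₀⁆ = rb x₀ c (k+1) := rfl

lemma key_s13 {L : Type*} [LieRing L] (x₀ : L) :
    ∀ (g m : ℕ) (b : L),
      ⁅rb x₀ b m, rb x₀ b (m+g+1)⁆ =
        ∑ j ∈ (Finset.range (2*m+g+1)).filter (fun j => 2*j+1 ≤ 2*m+g+1),
          gam g m j • rb x₀ ⁅rb x₀ b j, rb x₀ b (j+1)⁆ (2*m+g+1 - (2*j+1)) := by
  intro g
  induction g using Nat.strong_induction_on with
  | _ g ih =>
    match g with
    | 0 =>
      intro m b
      rw [Finset.sum_eq_single m]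
      · rw [show 2*m+0+1 - (2*m+1) = 0 from by omega]
        show _ = gam 0 m m • rb x₀ ⁅rb x₀ b m, rb x₀ b (m + 1)⁆ 0
        rw [show gam 0 m m = 1 from by simp [gam], one_smul]
        rfl
      · intro j _ hj; simp [gam, hj]
      · intro h
        exfalso
        apply h
        simp only [Finset.mem_filter, Finset.mem_range]
        omega
    | 1 =>
      intro m b
      have h1 : m + 1 + 1 = (m+1)+1 := rfl
      rw [show rb x₀ b (m+1+1) = ⁅rb x₀ b (m+1), x₀⁆ from rfl]
      rw [leibniz_lie]
      have h2 : ⁅rb x₀ b (m+1), ⁅rb x₀ b m, x₀⁆⁆ = 0 := by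
        rw [rb_lie]; exact lie_self _
      rw [h2, add_zero]
      rw [Finset.sum_eq_single m]
      · rw [show 2*m+1+1 - (2*m+1) = 1 from by omega]
        rw [show gam 1 m m = 1 from by simp [gam], one_smul]
        rfl
      · intro j _ hj; simp [gam, hj]
      · intro h
        exfalso
        apply h
        simp only [Finset.mem_filter, Finset.mem_range]
        omega
    | (g+2) =>
      intro m b
      have e1 : m + (g+2) + 1 = (m + (g+1) + 1) + 1 := by ring
      rw [e1, show rb x₀ b ((m + (g+1) + 1) + 1) = ⁅rb x₀ b (m + (g+1) + 1), x₀⁆ from rfl,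
        leibniz_lie, rb_lie]
      have hskew : ⁅rb x₀ b (m+(g+1)+1), rb x₀ b (m+1)⁆ =
          -⁅rb x₀ b (m+1), rb x₀ b (m+(g+1)+1)⁆ := by rw [lie_skew]
      rw [hskew]
      have e2 : m + (g+1) + 1 = (m+1) + g + 1 := by ring
      rw [ih (g+1) (by omega) m b, e2, ih g (by omega) (m+1) b]
      -- first sum: apply ⁅·, x₀⁆
      have hsum : ∀ (S : Finset ℕ) (f : ℕ → L), ⁅∑ j ∈ S, f j, x₀⁆ = ∑ j ∈ S, ⁅f j, x₀⁆ :=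
        fun S f => map_sum (AddMonoidHom.mk' (fun y : L => ⁅y, x₀⁆) (fun a c => add_lie a c x₀)) f S
      rw [hsum]
      have step1 :
          ∑ j ∈ (Finset.range (2*m+(g+1)+1)).filter (fun j => 2*j+1 ≤ 2*m+(g+1)+1),
            ⁅gam (g+1) m j • rb x₀ ⁅rb x₀ b j, rb x₀ b (j+1)⁆ (2*m+(g+1)+1 - (2*j+1)), x₀⁆
          = ∑ j ∈ (Finset.range (2*m+(g+1)+1)).filter (fun j => 2*j+1 ≤ 2*m+(g+1)+1),
            gam (g+1) m j • rb x₀ ⁅rb x₀ b j, rb x₀ b (j+1)⁆ (2*m+(g+2)+1 - (2*j+1)) := by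
        apply Finset.sum_congr rfl
        intro j hj
        simp only [Finset.mem_filter, Finset.mem_range] at hj
        rw [smul_lie, rb_lie]
        congr 2
        omega
      rw [step1]
      -- extend first sum to the bigger index set
      have hsub : (Finset.range (2*m+(g+1)+1)).filter (fun j => 2*j+1 ≤ 2*m+(g+1)+1) ⊆
          (Finset.range (2*m+(g+2)+1)).filter (fun j => 2*j+1 ≤ 2*m+(g+2)+1) := by
        intro j hj
        simp only [Finset.mem_filter, Finset.mem_range] at hj ⊢
        omega
      rw [Finset.sum_subset hsub (by
        intro j hjB hjA
        simp only [Finset.mem_filter, Finset.mem_range] at hjB hjA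
        have : gam (g+1) m j = 0 := gam_support (g+1) m j (by omega)
        rw [this, zero_smul])]
      -- second sum index set is already the target
      have hset : (Finset.range (2*(m+1)+g+1)).filter (fun j => 2*j+1 ≤ 2*(m+1)+g+1) =
          (Finset.range (2*m+(g+2)+1)).filter (fun j => 2*j+1 ≤ 2*m+(g+2)+1) := by
        congr 1 <;> [skip; rw [show 2*(m+1)+g+1 = 2*m+(g+2)+1 by ring]]
        rw [show 2*(m+1)+g+1 = 2*m+(g+2)+1 by ring]
      have hexp : ∀ j, 2*(m+1)+g+1 - (2*j+1) = 2*m+(g+2)+1 - (2*j+1) := by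
        intro j; omega
      rw [show (∑ j ∈ (Finset.range (2*(m+1)+g+1)).filter (fun j => 2*j+1 ≤ 2*(m+1)+g+1),
            gam g (m+1) j • rb x₀ ⁅rb x₀ b j, rb x₀ b (j+1)⁆ (2*(m+1)+g+1 - (2*j+1)))
          = ∑ j ∈ (Finset.range (2*m+(g+2)+1)).filter (fun j => 2*j+1 ≤ 2*m+(g+2)+1),
            gam g (m+1) j • rb x₀ ⁅rb x₀ b j, rb x₀ b (j+1)⁆ (2*m+(g+2)+1 - (2*j+1)) by
          rw [← hset]; apply Finset.sum_congr rfl; intro j _; rw [hexp]]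
      rw [← sub_eq_add_neg, ← Finset.sum_sub_distrib]
      apply Finset.sum_congr rfl
      intro j _
      rw [← sub_smul]
      rfl

theorem stmt13 {L : Type*} [LieRing L] (x₀ : L) :
    ∃ α : ℕ → ℕ → ℤ,
      (∀ (b : L) (ν : ℕ), 1 ≤ ν →
        ⁅b, rb x₀ b ν⁆ =
          ∑ j ∈ (Finset.range ν).filter (fun j => 2 * j + 1 ≤ ν),
            α ν j • rb x₀ ⁅rb x₀ b j, rb x₀ b (j + 1)⁆ (ν - (2 * j + 1))) ∧
      (∀ ν j : ℕ, 3 ≤ ν → 1 ≤ j → α ν j = α (ν - 1) j - α (ν - 2) (j - 1)) := by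
  refine ⟨fun ν j => gam (ν - 1) 0 j, ?_, ?_⟩
  · intro b ν hν
    have h := key_s13 x₀ (ν - 1) 0 b
    rw [show 0 + (ν-1) + 1 = ν by omega] at h
    simpa [show rb x₀ b 0 = b from rfl] using h
  · intro ν j hν hj
    obtain ⟨k, rfl⟩ : ∃ k, ν = k + 3 := ⟨ν - 3, by omega⟩
    obtain ⟨i, rfl⟩ : ∃ i, j = i + 1 := ⟨j - 1, by omega⟩
    simp only [show k+3-1 = k+2 by omega, show k+3-2 = k+1 by omega,
      show k+2-1 = k+1 by omega, show k+1-1 = k by omega, show i+1-1 = i by omega]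
    rw [show gam (k+2) 0 (i+1) = gam (k+1) 0 (i+1) - gam k (0+1) (i+1) from rfl, gam_shift]
end

section
/- For the system ẋ₁ = u, ẋ₂ = x₁, ẋ₃ = x₂² − x₁⁵ with x(0)=0, for every ρ > 0, every T ≤ 1/(9ρ³), and every u ∈ L^∞((0,T);ℝ) with ‖u‖_{L^∞} ≤ ρ and x₁(T;u) = 0, one has x₃(T;u) ≥ 0. Key estimates: ∫₀ᵀ u₁⁴ = −3∫₀ᵀ u u₁² u₂ ≤ 3ρ(∫₀ᵀ u₁⁴ ∫₀ᵀ u₂²)^{1/2}, hence ∫₀ᵀ u₁⁴ ≤ 9ρ² ∫₀ᵀ u₂², and |∫₀ᵀ u₁⁵| ≤ ρT ∫₀ᵀ u₁⁴ ≤ 9ρ³ T ∫₀ᵀ u₂². -/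
open MeasureTheory

private lemma abs_primitive_le {g : ℝ → ℝ} (hg : Integrable g) (x : ℝ) :
    |∫ y in (0:ℝ)..x, g y| ≤ ∫ y, |g y| := by
  have hnn : 0 ≤ᶠ[ae volume] fun y => |g y| := Filter.Eventually.of_forall fun y => abs_nonneg _
  rcases le_total 0 x with h | h
  · rw [intervalIntegral.integral_of_le h]
    calc |∫ y in Set.Ioc 0 x, g y| ≤ ∫ y in Set.Ioc 0 x, |g y| := by
          simpa using MeasureTheory.norm_integral_le_integral_norm (μ := volume.restrict (Set.Ioc 0 x)) g
      _ ≤ ∫ y, |g y| := setIntegral_le_integral hg.abs hnn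
  · rw [intervalIntegral.integral_symm, abs_neg, intervalIntegral.integral_of_le h]
    calc |∫ y in Set.Ioc x 0, g y| ≤ ∫ y in Set.Ioc x 0, |g y| := by
          simpa using MeasureTheory.norm_integral_le_integral_norm (μ := volume.restrict (Set.Ioc x 0)) g
      _ ≤ ∫ y, |g y| := setIntegral_le_integral hg.abs hnn

private lemma prodRule {f g : ℝ → ℝ} (hf : Integrable f) (hg : Integrable g)
    {s : ℝ} (hs : 0 ≤ s) :
    (∫ x in (0:ℝ)..s, f x) * (∫ x in (0:ℝ)..s, g x)
      = ∫ x in (0:ℝ)..s, ((f x * ∫ y in (0:ℝ)..x, g y) + (∫ y in (0:ℝ)..x, f y) * g x) := by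
  set F : ℝ → ℝ := fun x => ∫ y in (0:ℝ)..x, f y with hF
  set G : ℝ → ℝ := fun x => ∫ y in (0:ℝ)..x, g y with hG
  have hFc : Continuous F := intervalIntegral.continuous_primitive (fun a b => hf.intervalIntegrable) 0
  have hGc : Continuous G := intervalIntegral.continuous_primitive (fun a b => hg.intervalIntegrable) 0
  have hFb : ∀ x, |F x| ≤ ∫ y, |f y| := fun x => abs_primitive_le hf x
  have hGb : ∀ x, |G x| ≤ ∫ y, |g y| := fun x => abs_primitive_le hg x
  -- integrable products on the restricted measure
  have hfG : Integrable (fun x => f x * G x) (volume.restrict (Set.Ioc 0 s)) := by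
    have := (hf.restrict (s := Set.Ioc 0 s)).bdd_mul
      (hGc.aestronglyMeasurable) (c := ∫ y, |g y|) (Filter.Eventually.of_forall fun x => by simpa using hGb x)
    simpa [mul_comm] using this
  have hFg : Integrable (fun x => F x * g x) (volume.restrict (Set.Ioc 0 s)) := by
    exact (hg.restrict (s := Set.Ioc 0 s)).bdd_mul
      (hFc.aestronglyMeasurable) (c := ∫ y, |f y|) (Filter.Eventually.of_forall fun x => by simpa using hFb x)
  -- the kernel for Fubini
  set k : ℝ → ℝ → ℝ := fun x y => if x < y then f x * g y else 0 with hk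
  have hkint : Integrable (Function.uncurry k)
      ((volume.restrict (Set.Ioc 0 s)).prod (volume.restrict (Set.Ioc 0 s))) := by
    have h1 : Function.uncurry k
        = Set.indicator {p : ℝ × ℝ | p.1 < p.2} (fun p => f p.1 * g p.2) := by
      funext p
      simp [Function.uncurry, hk, Set.indicator_apply]
    rw [h1]
    exact (Integrable.mul_prod hf.restrict hg.restrict).indicator
      (measurableSet_lt measurable_fst measurable_snd)
  have step1 : ∀ x ∈ Set.Ioc (0:ℝ) s,
      (∫ y in Set.Ioc (0:ℝ) s, k x y) = f x * ∫ y in Set.Ioc x s, g y := by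
    intro x hx
    have h1 : (fun y => k x y) = (Set.Ioi x).indicator (fun y => f x * g y) := by
      funext y; simp [hk, Set.indicator_apply]
    rw [h1, MeasureTheory.integral_indicator measurableSet_Ioi,
      Measure.restrict_restrict measurableSet_Ioi]
    rw [show Set.Ioi x ∩ Set.Ioc 0 s = Set.Ioc x s by
      ext y
      simp only [Set.mem_inter_iff, Set.mem_Ioi, Set.mem_Ioc]
      exact ⟨fun ⟨h1, _, h3⟩ => ⟨h1, h3⟩, fun ⟨h1, h2⟩ => ⟨h1, hx.1.trans h1, h2⟩⟩]
    exact MeasureTheory.integral_const_mul _ _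
  have step2 : ∀ y ∈ Set.Ioc (0:ℝ) s,
      (∫ x in Set.Ioc (0:ℝ) s, k x y) = F y * g y := by
    intro y hy
    have h1 : (fun x => k x y) = (Set.Iio y).indicator (fun x => f x * g y) := by
      funext x; simp [hk, Set.indicator_apply]
    rw [h1, MeasureTheory.integral_indicator measurableSet_Iio,
      Measure.restrict_restrict measurableSet_Iio]
    rw [show Set.Iio y ∩ Set.Ioc 0 s = Set.Ioo 0 y by
      ext x
      simp only [Set.mem_inter_iff, Set.mem_Iio, Set.mem_Ioc, Set.mem_Ioo]
      exact ⟨fun ⟨h1, h2, _⟩ => ⟨h2, h1⟩, fun ⟨h1, h2⟩ => ⟨h2, h1, (le_of_lt h2).trans hy.2⟩⟩]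
    rw [← MeasureTheory.integral_Ioc_eq_integral_Ioo, MeasureTheory.integral_mul_const]
    exact congrArg (fun z => z * g y) (intervalIntegral.integral_of_le (le_of_lt hy.1)).symm
  -- main computation
  rw [intervalIntegral.integral_of_le hs, intervalIntegral.integral_of_le hs,
    intervalIntegral.integral_of_le hs]
  have key : (∫ x in Set.Ioc (0:ℝ) s, f x * (G s - G x)) = ∫ y in Set.Ioc (0:ℝ) s, F y * g y := by
    have e1 : ∀ x ∈ Set.Ioc (0:ℝ) s, f x * (G s - G x) = ∫ y in Set.Ioc (0:ℝ) s, k x y := by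
      intro x hx
      rw [step1 x hx]
      congr 1
      have : G x + ∫ y in x..s, g y = G s := by
        simp only [hG]
        exact intervalIntegral.integral_add_adjacent_intervals hg.intervalIntegrable
          hg.intervalIntegrable
      rw [← intervalIntegral.integral_of_le hx.2]
      linarith
    calc (∫ x in Set.Ioc (0:ℝ) s, f x * (G s - G x))
        = ∫ x in Set.Ioc (0:ℝ) s, ∫ y in Set.Ioc (0:ℝ) s, k x y :=
          setIntegral_congr_fun measurableSet_Ioc e1
      _ = ∫ y in Set.Ioc (0:ℝ) s, ∫ x in Set.Ioc (0:ℝ) s, k x y :=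
          MeasureTheory.integral_integral_swap hkint
      _ = ∫ y in Set.Ioc (0:ℝ) s, F y * g y :=
          setIntegral_congr_fun measurableSet_Ioc step2
  have split : (∫ x in Set.Ioc (0:ℝ) s, f x) * G s
      = (∫ x in Set.Ioc (0:ℝ) s, f x * G x) + ∫ x in Set.Ioc (0:ℝ) s, f x * (G s - G x) := by
    rw [← MeasureTheory.integral_add hfG]
    · rw [← MeasureTheory.integral_mul_const]
      congr 1; funext x; ring
    · have := (hf.restrict (s := Set.Ioc 0 s)).bdd_mul
        ((continuous_const.sub hGc).aestronglyMeasurable)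
        (c := |G s| + ∫ y, |g y|) (Filter.Eventually.of_forall fun x => by
          have := hGb x
          have : |G s - G x| ≤ |G s| + |G x| := abs_sub _ _
          simp only [Real.norm_eq_abs]
          have h2 := hGb x
          calc |G s - G x| ≤ |G s| + |G x| := abs_sub _ _
            _ ≤ |G s| + ∫ y, |g y| := by linarith)
      simpa [mul_comm] using this
  have hGs : (∫ x in Set.Ioc (0:ℝ) s, g x) = G s :=
    (intervalIntegral.integral_of_le hs).symm
  rw [hGs, split, key, ← MeasureTheory.integral_add hfG hFg]

theorem stmt16 (ρ T : ℝ) (hρ : 0 < ρ) (hT : 0 < T) (hTρ : T ≤ 1 / (9 * ρ ^ 3))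
    (u : ℝ → ℝ) (hmeas : Measurable u)
    (hbound : ∀ᵐ s ∂(volume.restrict (Set.Ioc 0 T)), |u s| ≤ ρ)
    (hend : (∫ x in (0:ℝ)..T, u x) = 0) :
    0 ≤ (∫ s in (0:ℝ)..T, (∫ x in (0:ℝ)..s, ∫ y in (0:ℝ)..x, u y) ^ 2)
        - ∫ s in (0:ℝ)..T, (∫ x in (0:ℝ)..s, u x) ^ 5 := by
  set v : ℝ → ℝ := (Set.Ioc 0 T).indicator u with hv
  have hv_meas : Measurable v := hmeas.indicator measurableSet_Ioc
  have hv_bound : ∀ᵐ x ∂(volume : Measure ℝ), |v x| ≤ ρ := by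
    have h := (ae_restrict_iff' measurableSet_Ioc).mp hbound
    filter_upwards [h] with x hx
    by_cases hmem : x ∈ Set.Ioc 0 T
    · rw [hv]; rw [Set.indicator_of_mem hmem]; exact hx hmem
    · rw [hv]; rw [Set.indicator_of_notMem hmem]; simpa using hρ.le
  have hv_int : Integrable v := by
    refine Integrable.mono' (g := (Set.Ioc 0 T).indicator fun _ => ρ)
      (by rw [integrable_indicator_iff measurableSet_Ioc]
          exact integrableOn_const measure_Ioc_lt_top.ne)
      hv_meas.aestronglyMeasurable ?_
    filter_upwards [hv_bound] with x hx
    by_cases hmem : x ∈ Set.Ioc 0 T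
    · rw [Set.indicator_of_mem hmem]; simpa using hx
    · rw [Set.indicator_of_notMem hmem, hv, Set.indicator_of_notMem hmem]; simp
  -- primitives
  set u1 : ℝ → ℝ := fun s => ∫ x in (0:ℝ)..s, v x with hu1
  set u2 : ℝ → ℝ := fun s => ∫ x in (0:ℝ)..s, u1 x with hu2
  have hu1c : Continuous u1 :=
    intervalIntegral.continuous_primitive (fun a b => hv_int.intervalIntegrable) 0
  have hu1b : ∀ x, |u1 x| ≤ ∫ y, |v y| := fun x => abs_primitive_le hv_int x
  -- u1 agrees with the primitive of u on [0, T]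
  have hveq : ∀ s, 0 ≤ s → s ≤ T → u1 s = ∫ x in (0:ℝ)..s, u x := by
    intro s h0 hsT
    rw [hu1]
    simp only
    rw [intervalIntegral.integral_of_le h0, intervalIntegral.integral_of_le h0, hv,
      MeasureTheory.integral_indicator measurableSet_Ioc,
      Measure.restrict_restrict measurableSet_Ioc,
      Set.inter_eq_self_of_subset_right (Set.Ioc_subset_Ioc_right hsT)]
  have hendv : u1 T = 0 := by rw [hveq T hT.le le_rfl]; exact hend
  -- u1 vanishes outside [0, T]
  have hu1zero : ∀ x, x ∉ Set.Icc (0:ℝ) T → u1 x = 0 := by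
    intro x hx
    rw [Set.mem_Icc, not_and_or] at hx
    rcases hx with hx | hx
    · push_neg at hx
      rw [hu1]
      simp only
      rw [intervalIntegral.integral_symm, intervalIntegral.integral_of_le hx.le]
      rw [setIntegral_eq_zero_of_forall_eq_zero]
      · simp
      · intro y hy
        rw [hv, Set.indicator_of_notMem]
        simp only [Set.mem_Ioc, not_and_or, not_lt]
        left; linarith [hy.2]
    · push_neg at hx
      have : u1 x = u1 T + ∫ y in T..x, v y := by
        rw [hu1]
        simp only
        rw [intervalIntegral.integral_add_adjacent_intervals hv_int.intervalIntegrable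
          hv_int.intervalIntegrable]
      rw [this, hendv, zero_add, intervalIntegral.integral_of_le hx.le,
        setIntegral_eq_zero_of_forall_eq_zero]
      intro y hy
      rw [hv, Set.indicator_of_notMem]
      simp only [Set.mem_Ioc, not_and_or, not_le]
      right; exact hy.1
  have hu1cs : HasCompactSupport u1 :=
    HasCompactSupport.intro isCompact_Icc hu1zero
  have hu1int : Integrable u1 := hu1c.integrable_of_hasCompactSupport hu1cs
  have hu2c : Continuous u2 :=
    intervalIntegral.continuous_primitive (fun a b => hu1int.intervalIntegrable) 0
  have hu2b : ∀ x, |u2 x| ≤ ∫ y, |u1 y| := fun x => abs_primitive_le hu1int x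
  -- square identity
  have hsq : ∀ s, 0 ≤ s → u1 s ^ 2 = ∫ x in (0:ℝ)..s, 2 * v x * u1 x := by
    intro s hs
    have := prodRule hv_int hv_int hs
    rw [hu1]
    simp only
    rw [sq, this]
    apply intervalIntegral.integral_congr
    intro x hx
    simp only
    ring
  -- integrability of 2 v u1
  have h2vu1 : Integrable (fun x => 2 * v x * u1 x) := by
    have : Integrable (fun x => (2 * u1 x) * v x) := by
      refine hv_int.bdd_mul (c := 2 * ∫ y, |v y|) ((continuous_const.mul hu1c).aestronglyMeasurable) ?_
      refine Filter.Eventually.of_forall fun x => (?_ : ‖_‖ ≤ 2 * ∫ y, |v y|)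
      rw [Real.norm_eq_abs, abs_mul]
      have := hu1b x
      have h2 : |(2:ℝ)| = 2 := by norm_num
      rw [h2]
      nlinarith [abs_nonneg (u1 x)]
    apply this.congr
    filter_upwards with x
    ring
  -- cube identity
  have hcube : ∀ s, 0 ≤ s → u1 s ^ 3 = ∫ x in (0:ℝ)..s, 3 * v x * u1 x ^ 2 := by
    intro s hs
    have hpr := prodRule h2vu1 hv_int hs
    have lhs_eq : (∫ x in (0:ℝ)..s, 2 * v x * u1 x) * (∫ x in (0:ℝ)..s, v x) = u1 s ^ 3 := by
      rw [← hsq s hs]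
      rw [hu1]
      simp only
      ring
    rw [← lhs_eq, hpr]
    apply intervalIntegral.integral_congr
    intro x hx
    have hx0 : 0 ≤ x := by
      rcases Set.mem_uIcc.mp hx with h | h
      · exact h.1
      · linarith [h.1, h.2, hs]
    simp only
    rw [← hsq x hx0]
    ring
  -- integrability of 3 v u1^2
  have h3vu1sq : Integrable (fun x => 3 * v x * u1 x ^ 2) := by
    have : Integrable (fun x => (3 * u1 x ^ 2) * v x) := by
      refine hv_int.bdd_mul (c := 3 * (∫ y, |v y|) ^ 2) ((continuous_const.mul (hu1c.pow 2)).aestronglyMeasurable) ?_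
      refine Filter.Eventually.of_forall fun x => (?_ : ‖_‖ ≤ 3 * (∫ y, |v y|) ^ 2)
      rw [Real.norm_eq_abs, abs_mul, abs_pow]
      have h1 := hu1b x
      have h3 : |(3:ℝ)| = 3 := by norm_num
      rw [h3]
      have h4 := abs_nonneg (u1 x)
      nlinarith
    apply this.congr
    filter_upwards with x
    ring
  -- main integration-by-parts identity
  have hmain : (0:ℝ) = ∫ s in (0:ℝ)..T, (3 * v s * u1 s ^ 2 * u2 s + u1 s ^ 3 * u1 s) := by
    have hpr := prodRule h3vu1sq hu1int hT.le
    have lhs0 : (∫ x in (0:ℝ)..T, 3 * v x * u1 x ^ 2) * (∫ x in (0:ℝ)..T, u1 x) = 0 := by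
      rw [← hcube T hT.le, hendv]
      ring
    rw [hpr] at lhs0
    refine lhs0.symm.trans ?_
    apply intervalIntegral.integral_congr
    intro x hx
    have hx0 : 0 ≤ x := by
      rcases Set.mem_uIcc.mp hx with h | h
      · exact h.1
      · linarith [h.1, h.2, hT.le]
    simp only
    rw [← hcube x hx0, hu2]
  -- notation for the two key integrals
  set A : ℝ := ∫ s in Set.Ioc (0:ℝ) T, u1 s ^ 4 with hA
  set B : ℝ := ∫ s in Set.Ioc (0:ℝ) T, u2 s ^ 2 with hB
  have hA0 : 0 ≤ A := setIntegral_nonneg measurableSet_Ioc (fun s _ => by positivity)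
  have hB0 : 0 ≤ B := setIntegral_nonneg measurableSet_Ioc (fun s _ => by positivity)
  -- integrability of the cross term
  have hcross : Integrable (fun s => 3 * v s * u1 s ^ 2 * u2 s) := by
    have : Integrable (fun x => (3 * u1 x ^ 2 * u2 x) * v x) := by
      refine hv_int.bdd_mul (c := 3 * (∫ y, |v y|) ^ 2 * (∫ y, |u1 y|)) (((continuous_const.mul (hu1c.pow 2)).mul hu2c).aestronglyMeasurable) ?_
      refine Filter.Eventually.of_forall fun x => (?_ : ‖_‖ ≤ 3 * (∫ y, |v y|) ^ 2 * (∫ y, |u1 y|))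
      rw [Real.norm_eq_abs, abs_mul, abs_mul, abs_pow]
      have h1 := hu1b x
      have h2 := hu2b x
      have h3 : |(3:ℝ)| = 3 := by norm_num
      rw [h3]
      have h4 := abs_nonneg (u1 x)
      have h5 := abs_nonneg (u2 x)
      have h6 : (0:ℝ) ≤ ∫ y, |u1 y| := le_trans h5 h2
      have h7 : (0:ℝ) ≤ ∫ y, |v y| := le_trans h4 h1
      have e1 : |u1 x| ^ 2 ≤ (∫ y, |v y|) ^ 2 := by nlinarith
      have e2 : |u1 x| ^ 2 * |u2 x| ≤ (∫ y, |v y|) ^ 2 * (∫ y, |u1 y|) :=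
        mul_le_mul e1 h2 h5 (by positivity)
      nlinarith
    apply this.congr
    filter_upwards with x
    ring
  have hint4 : IntegrableOn (fun s => u1 s ^ 4) (Set.Ioc (0:ℝ) T) := (hu1c.pow 4).integrableOn_Ioc
  have hint5 : IntegrableOn (fun s => u1 s ^ 5) (Set.Ioc (0:ℝ) T) := (hu1c.pow 5).integrableOn_Ioc
  have hint2 : IntegrableOn (fun s => u2 s ^ 2) (Set.Ioc (0:ℝ) T) := (hu2c.pow 2).integrableOn_Ioc
  -- A = - cross integral
  have hAeq : A = ∫ s in Set.Ioc (0:ℝ) T, -(3 * v s * u1 s ^ 2 * u2 s) := by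
    have h1 : (0:ℝ) = ∫ s in Set.Ioc (0:ℝ) T, (3 * v s * u1 s ^ 2 * u2 s + u1 s ^ 4) := by
      have h0 := hmain
      rw [intervalIntegral.integral_of_le hT.le] at h0
      refine h0.trans ?_
      apply setIntegral_congr_fun measurableSet_Ioc
      intro s _
      ring
    rw [MeasureTheory.integral_add hcross.restrict hint4] at h1
    rw [MeasureTheory.integral_neg]
    rw [hA]
    linarith
  -- Cauchy-Schwarz style bound : A ≤ 9 ρ² B
  have hAB : A ≤ 9 * ρ ^ 2 * B := by
    have hmono : A ≤ ∫ s in Set.Ioc (0:ℝ) T, (u1 s ^ 4 / 2 + 9 / 2 * ρ ^ 2 * u2 s ^ 2) := by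
      rw [hAeq]
      apply integral_mono_ae hcross.neg.restrict
      · exact (hint4.div_const 2).add (hint2.const_mul _)
      · filter_upwards [ae_restrict_of_ae hv_bound] with s hs
        simp only [Pi.neg_apply]
        have h1 : -(v s * u2 s) ≤ ρ * |u2 s| := by
          calc -(v s * u2 s) ≤ |v s * u2 s| := neg_le_abs _
            _ = |v s| * |u2 s| := abs_mul _ _
            _ ≤ ρ * |u2 s| := mul_le_mul_of_nonneg_right hs (abs_nonneg _)
        have h2 : 3 * u1 s ^ 2 * -(v s * u2 s) ≤ 3 * u1 s ^ 2 * (ρ * |u2 s|) :=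
          mul_le_mul_of_nonneg_left h1 (by positivity)
        nlinarith [sq_nonneg (u1 s ^ 2 - 3 * ρ * |u2 s|), sq_abs (u2 s)]
    have hsplit : (∫ s in Set.Ioc (0:ℝ) T, (u1 s ^ 4 / 2 + 9 / 2 * ρ ^ 2 * u2 s ^ 2))
        = A / 2 + 9 / 2 * ρ ^ 2 * B := by
      rw [MeasureTheory.integral_add (hint4.div_const 2) (hint2.const_mul _),
        MeasureTheory.integral_div, MeasureTheory.integral_const_mul]
    rw [hsplit] at hmono
    linarith
  -- |u1| ≤ ρ T on (0, T]
  have hu1T : ∀ s ∈ Set.Ioc (0:ℝ) T, |u1 s| ≤ ρ * T := by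
    intro s hs
    have h0s : (0:ℝ) ≤ s := hs.1.le
    have h1 : |u1 s| ≤ ∫ x in Set.Ioc (0:ℝ) s, |v x| := by
      rw [hu1]
      simp only
      rw [intervalIntegral.integral_of_le h0s]
      simpa using MeasureTheory.norm_integral_le_integral_norm (μ := volume.restrict (Set.Ioc 0 s)) v
    have h2 : (∫ x in Set.Ioc (0:ℝ) s, |v x|) ≤ ∫ _x in Set.Ioc (0:ℝ) s, ρ := by
      apply integral_mono_ae hv_int.abs.restrict
      · exact integrableOn_const measure_Ioc_lt_top.ne
      · exact ae_restrict_of_ae hv_bound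
    have h3 : (∫ _x in Set.Ioc (0:ℝ) s, ρ) = s * ρ := by
      rw [setIntegral_const, Real.volume_real_Ioc_of_le h0s, smul_eq_mul]
      ring_nf
    have h4 : s * ρ ≤ ρ * T := by
      rw [mul_comm]
      exact mul_le_mul_of_nonneg_left hs.2 hρ.le
    linarith
  -- fifth power bound
  have h5A : (∫ s in Set.Ioc (0:ℝ) T, u1 s ^ 5) ≤ ρ * T * A := by
    rw [hA, ← MeasureTheory.integral_const_mul]
    apply setIntegral_mono_on hint5 (hint4.const_mul _) measurableSet_Ioc
    intro s hs
    have h1 := hu1T s hs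
    have h2 : (0:ℝ) ≤ u1 s ^ 4 := by positivity
    calc u1 s ^ 5 = u1 s * u1 s ^ 4 := by ring
      _ ≤ |u1 s| * u1 s ^ 4 := mul_le_mul_of_nonneg_right (le_abs_self _) h2
      _ ≤ ρ * T * u1 s ^ 4 := mul_le_mul_of_nonneg_right h1 h2
  -- conclude the quantitative chain
  have h9 : 9 * ρ ^ 3 * T ≤ 1 := by
    have hpos : (0:ℝ) < 9 * ρ ^ 3 := by positivity
    rw [le_div_iff₀ hpos] at hTρ
    linarith
  have hfinal : (∫ s in Set.Ioc (0:ℝ) T, u1 s ^ 5) ≤ B := by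
    have h1 : ρ * T * A ≤ ρ * T * (9 * ρ ^ 2 * B) :=
      mul_le_mul_of_nonneg_left hAB (by positivity)
    have h2 : ρ * T * (9 * ρ ^ 2 * B) = (9 * ρ ^ 3 * T) * B := by ring
    have h3 : (9 * ρ ^ 3 * T) * B ≤ 1 * B := mul_le_mul_of_nonneg_right h9 hB0
    linarith
  -- rewrite the goal in terms of u1, u2
  have goal2 : (∫ s in (0:ℝ)..T, (∫ x in (0:ℝ)..s, ∫ y in (0:ℝ)..x, u y) ^ 2) = B := by
    rw [hB, ← intervalIntegral.integral_of_le hT.le]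
    apply intervalIntegral.integral_congr
    intro s hs
    rw [Set.uIcc_of_le hT.le] at hs
    have hin : (∫ x in (0:ℝ)..s, ∫ y in (0:ℝ)..x, u y) = u2 s := by
      rw [hu2]
      simp only
      apply intervalIntegral.integral_congr
      intro x hx
      rw [Set.uIcc_of_le hs.1] at hx
      exact (hveq x hx.1 (hx.2.trans hs.2)).symm
    show (∫ x in (0:ℝ)..s, ∫ y in (0:ℝ)..x, u y) ^ 2 = u2 s ^ 2
    rw [hin]
  have goal5 : (∫ s in (0:ℝ)..T, (∫ x in (0:ℝ)..s, u x) ^ 5)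
      = ∫ s in Set.Ioc (0:ℝ) T, u1 s ^ 5 := by
    rw [← intervalIntegral.integral_of_le hT.le]
    apply intervalIntegral.integral_congr
    intro s hs
    rw [Set.uIcc_of_le hT.le] at hs
    show (∫ x in (0:ℝ)..s, u x) ^ 5 = u1 s ^ 5
    rw [← hveq s hs.1 hs.2]
  rw [goal2, goal5]
  linarith
end
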